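/- arXiv:2006.09958 — 6 statements merged into one kernel-verified Lean document; each statement's English description precedes it below -/
import Mathlib

section
/- Let u be in the MRT class with associated sequences (t_m) and (s_m). Let m ≥ 1 and let n ≤ t_{m+1} be a positive integer. If the total number of prime factors of n that are ≤ t_m, counted with multiplicity (i.e., Σ_{p ≤ t_m} α_p(n), where α_p(n) is the exponent of p in n), is at most t_m, then |u(n) − n^{i s_{m+1}}| ≤ 1/t_m. -/
open MeasureTheory Filter Topology

noncomputable section

/-- The left shift on sequence space. -/
def shift : (ℕ → ℂ) → (ℕ → ℂ) := fun y n => y (n + 1)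

/-- The point of `(S¹)^ℕ` associated with the arithmetic function `u` (indexed from 1). -/
def pt (u : ℕ → ℂ) : ℕ → ℂ := fun n => u (n + 1)

/-- `u` is a completely multiplicative function taking values in the unit circle, in the MRT
class with associated increasing sequences `t`, `s` of positive integers. -/
structure IsMRT (u : ℕ → ℂ) (t s : ℕ → ℕ) : Prop where
  norm_one : ∀ n, 1 ≤ n → ‖u n‖ = 1
  mult : ∀ m n, 1 ≤ m → 1 ≤ n → u (m * n) = u m * u n
  t_mono : StrictMono t
  s_mono : StrictMono s
  t_pos : ∀ m, 1 ≤ t m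
  s_pos : ∀ m, 1 ≤ s m
  t_lt_s : ∀ m, 1 ≤ m → t m < s (m + 1)
  s_lt_sq : ∀ m, 1 ≤ m → s (m + 1) < (s (m + 1)) ^ 2
  sq_le_t : ∀ m, 1 ≤ m → (s (m + 1)) ^ 2 ≤ t (m + 1)
  map_prime_big : ∀ m, 1 ≤ m → ∀ p : ℕ, p.Prime → t m < p → p ≤ t (m + 1) →
    u p = (p : ℂ) ^ ((s (m + 1) : ℂ) * Complex.I)
  map_prime_small : ∀ m, 1 ≤ m → ∀ p : ℕ, p.Prime → p ≤ t m →
    ‖u p - (p : ℂ) ^ ((s (m + 1) : ℂ) * Complex.I)‖ < 1 / (t m : ℝ) ^ 2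


lemma mrt_cpow_norm (k : ℕ) (hk : 0 < k) (c : ℝ) :
    ‖((k : ℕ) : ℂ) ^ ((c : ℂ) * Complex.I)‖ = 1 := by
  rw [show ((k:ℂ)) = ((k:ℝ):ℂ) by push_cast; ring,
    Complex.norm_cpow_eq_rpow_re_of_pos (by exact_mod_cast hk)]
  simp

lemma mrt_cpow_mul (p k : ℕ) (c : ℂ) :
    ((p * k : ℕ) : ℂ) ^ c = ((p : ℕ) : ℂ) ^ c * ((k : ℕ) : ℂ) ^ c := by
  push_cast
  rw [show ((p:ℂ)) = ((p:ℝ):ℂ) by push_cast; ring,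
      show ((k:ℂ)) = ((k:ℝ):ℂ) by push_cast; ring,
      ← Complex.mul_cpow_ofReal_nonneg (by positivity) (by positivity)]

lemma mrt_aux (u : ℕ → ℂ) (t s : ℕ → ℕ) (hu : IsMRT u t s) (m : ℕ) (hm : 1 ≤ m) :
    ∀ n, 1 ≤ n → n ≤ t (m + 1) →
    ‖u n - (n : ℂ) ^ ((s (m + 1) : ℂ) * Complex.I)‖ ≤
      (∑ p ∈ Finset.filter Nat.Prime (Finset.range (t m + 1)), n.factorization p : ℝ)
        / (t m : ℝ) ^ 2 := by
  have htm : (0:ℝ) < (t m : ℝ) := by exact_mod_cast hu.t_pos m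
  set c : ℂ := (s (m + 1) : ℂ) * Complex.I with hc
  intro n
  induction n using Nat.strong_induction_on with
  | _ n ih =>
    intro hn hnt
    rcases eq_or_lt_of_le hn with h1 | h1
    · -- n = 1
      have hu1 : u 1 = 1 := by
        have h := hu.mult 1 1 le_rfl le_rfl
        have hne : u 1 ≠ 0 := by
          intro h0
          simpa [h0] using hu.norm_one 1 le_rfl
        rw [mul_one] at h
        exact (mul_left_cancel₀ hne (by rw [← h, mul_one])).symm
      rw [← h1]
      simp [hu1]
    · -- n > 1
      obtain ⟨p, hp, hpd⟩ := Nat.exists_prime_and_dvd (by omega : n ≠ 1)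
      obtain ⟨k, hk⟩ := hpd
      have hppos : 0 < p := hp.pos
      have hkpos : 0 < k := by
        rcases Nat.eq_zero_or_pos k with h | h
        · rw [h, mul_zero] at hk; omega
        · exact h
      have hklt : k < n := by
        have := hp.two_le
        calc k < 2 * k := by omega
        _ ≤ p * k := by exact Nat.mul_le_mul_right k (by omega)
        _ = n := hk.symm
      have hkt : k ≤ t (m + 1) := le_trans (le_of_lt hklt) hnt
      have hIH := ih k hklt hkpos hkt
      have hup : u n = u p * u k := by rw [hk]; exact hu.mult p k hppos hkpos
      have hgp : (n : ℂ) ^ c = (p : ℂ) ^ c * (k : ℂ) ^ c := by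
        rw [hk]; exact mrt_cpow_mul p k c
      -- split
      have hsplit : u n - (n:ℂ)^c = u p * (u k - (k:ℂ)^c) + (u p - (p:ℂ)^c) * (k:ℂ)^c := by
        rw [hup, hgp]; ring
      have hnup : ‖u p‖ = 1 := hu.norm_one p hppos
      have hngk : ‖((k:ℕ):ℂ)^c‖ = 1 := mrt_cpow_norm k hkpos (s (m+1))
      have hbound : ‖u n - (n:ℂ)^c‖ ≤ ‖u k - (k:ℂ)^c‖ + ‖u p - (p:ℂ)^c‖ := by
        rw [hsplit]
        calc ‖u p * (u k - (k:ℂ)^c) + (u p - (p:ℂ)^c) * (k:ℂ)^c‖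
            ≤ ‖u p * (u k - (k:ℂ)^c)‖ + ‖(u p - (p:ℂ)^c) * (k:ℂ)^c‖ := norm_add_le _ _
          _ = ‖u k - (k:ℂ)^c‖ + ‖u p - (p:ℂ)^c‖ := by
              rw [norm_mul, norm_mul, hnup, hngk, one_mul, mul_one]
      -- factorization sum
      set F := Finset.filter Nat.Prime (Finset.range (t m + 1)) with hF
      have hsum : ∑ q ∈ F, n.factorization q
          = (∑ q ∈ F, k.factorization q) + (if p ≤ t m then 1 else 0) := by
        rw [hk, Nat.factorization_mul (by omega) (by omega)]
        have : ∑ q ∈ F, (p.factorization + k.factorization) q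
            = ∑ q ∈ F, (p.factorization q + k.factorization q) := by
          simp [Finsupp.add_apply]
        rw [Finsupp.coe_add]
        simp only [Pi.add_apply, Finset.sum_add_distrib]
        have hpf : ∑ q ∈ F, p.factorization q = if p ≤ t m then 1 else 0 := by
          rw [hp.factorization]
          simp only [Finsupp.single_apply]
          rw [Finset.sum_ite_eq F p (fun _ => 1)]
          congr 1
          simp [hF, Finset.mem_filter, Nat.lt_succ_iff, hp]
        omega
      have hsumR : (∑ q ∈ F, (n.factorization q : ℝ))
          = (∑ q ∈ F, (k.factorization q : ℝ)) + (if p ≤ t m then (1:ℝ) else 0) := by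
        rw [← Nat.cast_sum, ← Nat.cast_sum, hsum]
        push_cast
        split_ifs <;> simp
      by_cases hple : p ≤ t m
      · -- small prime
        have hpsmall := le_of_lt (hu.map_prime_small m hm p hp hple)
        have : ‖u n - (n:ℂ)^c‖ ≤
            (∑ q ∈ F, k.factorization q : ℝ) / (t m : ℝ)^2 + 1 / (t m : ℝ)^2 :=
          le_trans hbound (add_le_add hIH hpsmall)
        refine le_trans this ?_
        rw [hsumR]
        simp only [hple, if_true]
        rw [add_div]
      · -- big prime
        have hplt : t m < p := by omega
        have hpt : p ≤ t (m + 1) := by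
          calc p ≤ p * k := Nat.le_mul_of_pos_right p hkpos
          _ = n := hk.symm
          _ ≤ t (m + 1) := hnt
        have hpeq := hu.map_prime_big m hm p hp hplt hpt
        have : ‖u n - (n:ℂ)^c‖ ≤ (∑ q ∈ F, k.factorization q : ℝ) / (t m : ℝ)^2 := by
          refine le_trans hbound ?_
          rw [hpeq]
          simpa [hc] using hIH
        refine le_trans this ?_
        rw [hsumR]
        simp [hple]

/-- Let `u` be in the MRT class with sequences `(t_m)`, `(s_m)`. Let `m ≥ 1` and
`1 ≤ n ≤ t_{m+1}`. If the number of prime factors of `n` that are `≤ t_m`, counted with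
multiplicity, is at most `t_m`, then `|u(n) − n^{i s_{m+1}}| ≤ 1/t_m`. -/
theorem mrt_easy_lemma (u : ℕ → ℂ) (t s : ℕ → ℕ) (hu : IsMRT u t s) (m n : ℕ)
    (hm : 1 ≤ m) (hn : 1 ≤ n) (hnt : n ≤ t (m + 1))
    (hfac : ∑ p ∈ Finset.filter Nat.Prime (Finset.range (t m + 1)), n.factorization p ≤ t m) :
    ‖u n - (n : ℂ) ^ ((s (m + 1) : ℂ) * Complex.I)‖ ≤ 1 / (t m : ℝ) := by
  have htm : (0:ℝ) < (t m : ℝ) := by exact_mod_cast hu.t_pos m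
  have h := mrt_aux u t s hu m hm n hn hnt
  refine le_trans h ?_
  rw [div_le_div_iff₀ (by positivity) htm]
  have : (∑ p ∈ Finset.filter Nat.Prime (Finset.range (t m + 1)), n.factorization p : ℝ)
      ≤ (t m : ℝ) := by exact_mod_cast hfac
  nlinarith
end
end

section
/- Let u be in the MRT class with associated sequences (t_m) and (s_m). Let (N_m) be an increasing sequence of positive integers with N_m ≤ t_{m+1} for each m. Then (1/N_m) · #{ n ∈ {1, …, N_m} : |u(n) − n^{i s_{m+1}}| > 1/t_m } ≤ ε_{t_m}, and this quantity tends to 0 as m → ∞, where ε_t := sup_{N ≥ 1} (1/N) · #{ 1 ≤ n ≤ N : Σ_{p ≤ t} α_p(n) ≥ t }. -/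
open MeasureTheory Filter Topology Finset

noncomputable section

/-- `B_t` is the set of positive integers having at least `t` prime factors less than or
equal to `t`, counted with multiplicity. -/
def Bset (t : ℕ) : Set ℕ :=
  {n : ℕ | t ≤ ∑ p ∈ Finset.filter Nat.Prime (Finset.range (t + 1)), n.factorization p}

/-- `ε_t = sup_{N ≥ 1} (1/N) Σ_{1 ≤ n ≤ N} 1_{B_t}(n)`. -/
def eps (t : ℕ) : ℝ :=
  ⨆ N : ℕ, (N : ℝ)⁻¹ * ∑ n ∈ Finset.Icc 1 N, (Bset t).indicator (fun _ => (1 : ℝ)) n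

lemma norm_cpow_nat (k s0 : ℕ) (hk : 1 ≤ k) :
    ‖(k : ℂ) ^ ((s0 : ℂ) * Complex.I)‖ = 1 := by
  have hk' : (0:ℝ) < (k:ℝ) := by exact_mod_cast hk
  have : ((k:ℂ)) = ((k:ℝ):ℂ) := by push_cast; ring
  rw [this, Complex.norm_cpow_eq_rpow_re_of_pos hk']
  simp

lemma sum_fact_prime_self (p t0 : ℕ) (hp : p.Prime) (hpt : p ≤ t0) :
    ∑ q ∈ (Finset.range (t0 + 1)).filter Nat.Prime, (p.factorization q) = 1 := by
  rw [Finset.sum_eq_single p]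
  · simp [hp.factorization]
  · intro q hq hne
    simp [hp.factorization, Finsupp.single_apply, hne.symm]
  · intro h
    exact absurd (Finset.mem_filter.2 ⟨Finset.mem_range.2 (Nat.lt_succ_of_le hpt), hp⟩) h

lemma sum_fact_prime_not (p t0 : ℕ) (hp : p.Prime) (hpt : t0 < p) :
    ∑ q ∈ (Finset.range (t0 + 1)).filter Nat.Prime, (p.factorization q) = 0 := by
  apply Finset.sum_eq_zero
  intro q hq
  rw [Finset.mem_filter, Finset.mem_range] at hq
  have : q ≠ p := by omega
  simp [hp.factorization, Finsupp.single_apply, Ne.symm this]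

lemma u_one (u : ℕ → ℂ) (t s : ℕ → ℕ) (hu : IsMRT u t s) : u 1 = 1 := by
  have h := hu.mult 1 1 le_rfl le_rfl
  have hn : u 1 ≠ 0 := by
    intro h0
    have := hu.norm_one 1 le_rfl
    rw [h0] at this; simp at this
  have h2 : u 1 * 1 = u 1 * u 1 := by rw [mul_one]; exact h
  exact (mul_left_cancel₀ hn h2).symm

lemma key_bound (u : ℕ → ℂ) (t s : ℕ → ℕ) (hu : IsMRT u t s) (m : ℕ) (hm : 1 ≤ m) :
    ∀ n : ℕ, 1 ≤ n → n ≤ t (m + 1) →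
      ‖u n - (n : ℂ) ^ ((s (m + 1) : ℂ) * Complex.I)‖ ≤
        (∑ q ∈ (Finset.range (t m + 1)).filter Nat.Prime, (n.factorization q) : ℕ) / (t m : ℝ) ^ 2 := by
  intro n
  induction n using Nat.strong_induction_on with
  | _ n ih =>
    intro hn1 hnt
    rcases eq_or_lt_of_le hn1 with h1 | h1
    · -- n = 1
      rw [← h1]
      simp [u_one u t s hu, Complex.one_cpow]
    · -- n > 1
      set p := n.minFac with hp_def
      have hp : p.Prime := Nat.minFac_prime (by omega)
      have hpdvd : p ∣ n := Nat.minFac_dvd n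
      obtain ⟨n', hn'⟩ := hpdvd
      have hn'pos : 1 ≤ n' := by
        rcases Nat.eq_zero_or_pos n' with h | h
        · subst h; omega
        · exact h
      have hplt : 2 ≤ p := hp.two_le
      have hn'lt : n' < n := by
        rw [hn']; nlinarith
      have hn'le : n' ≤ t (m + 1) := le_trans (le_of_lt (lt_of_lt_of_le hn'lt hnt)) le_rfl
      have hmu : u n = u p * u n' := by rw [hn']; exact hu.mult p n' (by omega) hn'pos
      set c : ℂ := (s (m + 1) : ℂ) * Complex.I with hc
      have hcpow : (n : ℂ) ^ c = (p : ℂ) ^ c * (n' : ℂ) ^ c := by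
        rw [hn']
        push_cast
        rw [← Complex.ofReal_natCast p, ← Complex.ofReal_natCast n',
          Complex.mul_cpow_ofReal_nonneg (by positivity) (by positivity)]
      have hsplit : u n - (n : ℂ) ^ c =
          u p * (u n' - (n' : ℂ) ^ c) + (u p - (p : ℂ) ^ c) * (n' : ℂ) ^ c := by
        rw [hmu, hcpow]; ring
      have hnorm : ‖u n - (n : ℂ) ^ c‖ ≤
          ‖u n' - (n' : ℂ) ^ c‖ + ‖u p - (p : ℂ) ^ c‖ := by
        rw [hsplit]
        refine le_trans (norm_add_le _ _) ?_
        rw [norm_mul, norm_mul, hu.norm_one p (by omega), norm_cpow_nat n' (s (m+1)) hn'pos,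
          one_mul, mul_one]
      have hfact : (∑ q ∈ (Finset.range (t m + 1)).filter Nat.Prime, (n.factorization q))
          = (∑ q ∈ (Finset.range (t m + 1)).filter Nat.Prime, (n'.factorization q))
            + (∑ q ∈ (Finset.range (t m + 1)).filter Nat.Prime, (p.factorization q)) := by
        rw [hn', Nat.factorization_mul (by omega) (by omega)]
        simp [Finset.sum_add_distrib]
        ring
      have htm : (0:ℝ) < (t m : ℝ) ^ 2 := by
        have := hu.t_pos m; positivity
      have ihn' := ih n' hn'lt hn'pos hn'le
      rcases le_or_gt p (t m) with hcase | hcase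
      · -- small prime
        have hsmall := hu.map_prime_small m hm p hp hcase
        have : ‖u n - (n : ℂ) ^ c‖ ≤
            (∑ q ∈ (Finset.range (t m + 1)).filter Nat.Prime, (n'.factorization q) : ℕ) / (t m : ℝ) ^ 2
            + 1 / (t m : ℝ) ^ 2 := by
          refine le_trans hnorm (add_le_add ihn' (le_of_lt hsmall))
        refine le_trans this ?_
        rw [hfact, sum_fact_prime_self p (t m) hp hcase]
        push_cast
        rw [add_div]
      · -- big prime
        have hple : p ≤ t (m + 1) := le_trans (Nat.minFac_le (by omega)) hnt
        have hbig := hu.map_prime_big m hm p hp hcase hple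
        have hz : ‖u p - (p : ℂ) ^ c‖ = 0 := by rw [hbig]; simp [hc]
        have : ‖u n - (n : ℂ) ^ c‖ ≤
            (∑ q ∈ (Finset.range (t m + 1)).filter Nat.Prime, (n'.factorization q) : ℕ) / (t m : ℝ) ^ 2 := by
          refine le_trans hnorm ?_
          rw [hz, add_zero]; exact ihn'
        refine le_trans this ?_
        rw [hfact, sum_fact_prime_not p (t m) hp hcase]
        simp

lemma fact_eq_card (p n N : ℕ) (hp : p.Prime) (hn : 1 ≤ n) (hnN : n ≤ N) :
    n.factorization p = ((Finset.Icc 1 N).filter (fun k => p ^ k ∣ n)).card := by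
  have hn0 : n ≠ 0 := by omega
  have hfle : n.factorization p ≤ N := le_trans (le_of_lt (Nat.factorization_lt p hn0)) hnN
  have hset : (Finset.Icc 1 N).filter (fun k => p ^ k ∣ n) = Finset.Icc 1 (n.factorization p) := by
    ext k
    simp only [Finset.mem_filter, Finset.mem_Icc]
    constructor
    · rintro ⟨⟨h1, h2⟩, hdvd⟩
      exact ⟨h1, (Nat.Prime.pow_dvd_iff_le_factorization hp hn0).1 hdvd⟩
    · rintro ⟨h1, h2⟩
      exact ⟨⟨h1, le_trans h2 hfle⟩, (Nat.Prime.pow_dvd_iff_le_factorization hp hn0).2 h2⟩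
  rw [hset, Nat.card_Icc]
  omega

lemma sum_fact_le (p N : ℕ) (hp : p.Prime) :
    (∑ n ∈ Finset.Icc 1 N, (n.factorization p : ℝ)) ≤ (N : ℝ) / ((p : ℝ) - 1) := by
  have hp2 : 2 ≤ p := hp.two_le
  have hp2' : (2:ℝ) ≤ (p:ℝ) := by exact_mod_cast hp2
  -- swap summation
  have hswap : (∑ n ∈ Finset.Icc 1 N, (n.factorization p : ℕ))
      = ∑ k ∈ Finset.Icc 1 N, ((Finset.Icc 1 N).filter (fun n => p ^ k ∣ n)).card := by
    have : ∀ n ∈ Finset.Icc 1 N, (n.factorization p : ℕ)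
        = ((Finset.Icc 1 N).filter (fun k => p ^ k ∣ n)).card := by
      intro n hn
      rw [Finset.mem_Icc] at hn
      exact fact_eq_card p n N hp hn.1 hn.2
    rw [Finset.sum_congr rfl this]
    simp only [Finset.card_filter]
    rw [Finset.sum_comm]
  -- card of multiples
  have hcard : ∀ k, ((Finset.Icc 1 N).filter (fun n => p ^ k ∣ n)).card = N / p ^ k := by
    intro k
    have : Finset.Icc 1 N = Finset.Ioc 0 N := rfl
    rw [this]
    have := Nat.Ioc_filter_dvd_card_eq_div N (p ^ k)
    convert this using 2
  have step1 : (∑ n ∈ Finset.Icc 1 N, (n.factorization p : ℝ))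
      ≤ ∑ k ∈ Finset.Icc 1 N, (N : ℝ) / (p : ℝ) ^ k := by
    have : (∑ n ∈ Finset.Icc 1 N, (n.factorization p : ℝ))
        = ∑ k ∈ Finset.Icc 1 N, ((N / p ^ k : ℕ) : ℝ) := by
      rw_mod_cast [hswap]
      exact Finset.sum_congr rfl fun k _ => by rw [hcard k]
    rw [this]
    apply Finset.sum_le_sum
    intro k _
    rw [div_eq_mul_inv, ← Nat.cast_pow]
    calc ((N / p ^ k : ℕ) : ℝ) ≤ (N : ℝ) / ((p ^ k : ℕ) : ℝ) := Nat.cast_div_le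
      _ = (N : ℝ) * ((p ^ k : ℕ) : ℝ)⁻¹ := div_eq_mul_inv _ _
  refine le_trans step1 ?_
  set x : ℝ := (p:ℝ)⁻¹ with hxdef
  have hx : (0:ℝ) < x := by positivity
  have hx1 : x < 1 := by
    rw [hxdef, inv_lt_one_iff₀]; right; linarith
  have h1x : (0:ℝ) < 1 - x := by linarith
  have hrw : ∑ k ∈ Finset.Icc 1 N, (N : ℝ) / (p : ℝ) ^ k
      = (N:ℝ) * ∑ k ∈ Finset.Icc 1 N, x ^ k := by
    rw [Finset.mul_sum]
    refine Finset.sum_congr rfl fun k _ => ?_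
    rw [hxdef, div_eq_mul_inv, inv_pow]
  rw [hrw]
  have hgs : ∑ k ∈ Finset.Icc 1 N, x ^ k = x * ∑ k ∈ Finset.range N, x ^ k := by
    rw [← Finset.Ico_add_one_right_eq_Icc, Finset.sum_Ico_eq_sum_range, Finset.mul_sum]
    have hN : N + 1 - 1 = N := by omega
    rw [hN]
    refine Finset.sum_congr rfl fun k _ => ?_
    rw [pow_add, pow_one]
  have hxN0 : (0:ℝ) ≤ x ^ N := by positivity
  have hgeom : ∑ k ∈ Finset.range N, x ^ k ≤ (1 - x)⁻¹ := by
    rw [geom_sum_eq (ne_of_lt hx1)]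
    calc (x ^ N - 1) / (x - 1) = (1 - x ^ N) / (1 - x) := by
          rw [← neg_div_neg_eq]; ring_nf
      _ ≤ 1 / (1 - x) := by gcongr; linarith
      _ = (1 - x)⁻¹ := one_div _
  have hfin : ∑ k ∈ Finset.Icc 1 N, x ^ k ≤ x / (1 - x) := by
    rw [hgs, div_eq_mul_inv]
    exact mul_le_mul_of_nonneg_left hgeom (le_of_lt hx)
  have hxeq : x / (1 - x) = 1 / ((p:ℝ) - 1) := by
    rw [hxdef]
    field_simp
  have hN0 : (0:ℝ) ≤ (N:ℝ) := Nat.cast_nonneg N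
  calc (N:ℝ) * ∑ k ∈ Finset.Icc 1 N, x ^ k ≤ (N:ℝ) * (x / (1-x)) :=
        mul_le_mul_of_nonneg_left hfin hN0
    _ = (N:ℝ) / ((p:ℝ) - 1) := by rw [hxeq]; ring

lemma markov_count (t0 Nn : ℕ) :
    (((Finset.Icc 1 Nn).filter (fun n =>
        t0 ≤ ∑ q ∈ (Finset.range (t0 + 1)).filter Nat.Prime, (n.factorization q))).card * t0 : ℕ)
      ≤ ∑ n ∈ Finset.Icc 1 Nn, ∑ q ∈ (Finset.range (t0 + 1)).filter Nat.Prime, (n.factorization q) := by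
  set S := (Finset.Icc 1 Nn).filter (fun n =>
      t0 ≤ ∑ q ∈ (Finset.range (t0 + 1)).filter Nat.Prime, (n.factorization q)) with hS
  calc S.card * t0 = ∑ _n ∈ S, t0 := by rw [Finset.sum_const, smul_eq_mul]
    _ ≤ ∑ n ∈ S, ∑ q ∈ (Finset.range (t0 + 1)).filter Nat.Prime, (n.factorization q) := by
        apply Finset.sum_le_sum
        intro n hn
        exact (Finset.mem_filter.1 hn).2
    _ ≤ ∑ n ∈ Finset.Icc 1 Nn, ∑ q ∈ (Finset.range (t0 + 1)).filter Nat.Prime, (n.factorization q) :=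
        Finset.sum_le_sum_of_subset (Finset.filter_subset _ _)

lemma harmonic_bound (t0 : ℕ) :
    ∑ q ∈ (Finset.range (t0 + 1)).filter Nat.Prime, (1:ℝ) / ((q:ℝ) - 1)
      ≤ ∑ j ∈ Finset.range t0, (1:ℝ) / ((j:ℝ) + 1) := by
  have hinj : ∀ a ∈ (Finset.range (t0 + 1)).filter Nat.Prime,
      ∀ b ∈ (Finset.range (t0 + 1)).filter Nat.Prime, a - 2 = b - 2 → a = b := by
    intro a ha b hb hab
    simp only [Finset.mem_filter, Finset.mem_range] at ha hb
    have := ha.2.two_le; have := hb.2.two_le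
    omega
  calc ∑ q ∈ (Finset.range (t0 + 1)).filter Nat.Prime, (1:ℝ) / ((q:ℝ) - 1)
      = ∑ q ∈ (Finset.range (t0 + 1)).filter Nat.Prime, (1:ℝ) / (((q - 2 : ℕ):ℝ) + 1) := by
        refine Finset.sum_congr rfl fun q hq => ?_
        simp only [Finset.mem_filter, Finset.mem_range] at hq
        have h2 : 2 ≤ q := hq.2.two_le
        rw [Nat.cast_sub h2]
        push_cast
        ring
    _ = ∑ j ∈ ((Finset.range (t0 + 1)).filter Nat.Prime).image (fun q : ℕ => q - 2),
          (1:ℝ) / ((j:ℝ) + 1) := (Finset.sum_image (g := fun q : ℕ => q - 2) (f := fun j : ℕ => (1:ℝ) / ((j:ℝ) + 1)) hinj).symm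
    _ ≤ ∑ j ∈ Finset.range t0, (1:ℝ) / ((j:ℝ) + 1) := by
        apply Finset.sum_le_sum_of_subset_of_nonneg
        · intro j hj
          simp only [Finset.mem_image, Finset.mem_filter, Finset.mem_range] at hj ⊢
          obtain ⟨q, ⟨hq1, hq2⟩, rfl⟩ := hj
          have := hq2.two_le
          omega
        · intro j _ _
          positivity

lemma indicator_sum_eq (t0 Nn : ℕ) :
    ∑ n ∈ Finset.Icc 1 Nn, (Bset t0).indicator (fun _ => (1 : ℝ)) n
      = (((Finset.Icc 1 Nn).filter (fun n =>
          t0 ≤ ∑ q ∈ (Finset.range (t0 + 1)).filter Nat.Prime, (n.factorization q))).card : ℝ) := by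
  classical
  rw [Finset.card_filter]
  push_cast
  refine Finset.sum_congr rfl fun n _ => ?_
  rw [Set.indicator_apply]
  simp only [Bset, Set.mem_setOf_eq]

lemma eps_le (t0 : ℕ) (ht : 1 ≤ t0) :
    eps t0 ≤ (∑ j ∈ Finset.range t0, (1:ℝ) / ((j:ℝ) + 1)) / (t0 : ℝ) := by
  have hH : (0:ℝ) ≤ ∑ j ∈ Finset.range t0, (1:ℝ) / ((j:ℝ) + 1) := by
    apply Finset.sum_nonneg; intro j _; positivity
  have ht0 : (0:ℝ) < (t0:ℝ) := by exact_mod_cast ht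
  apply ciSup_le
  intro Nn
  rw [indicator_sum_eq]
  rcases Nat.eq_zero_or_pos Nn with h | h
  · subst h; simp; positivity
  · have hNn : (0:ℝ) < (Nn:ℝ) := by exact_mod_cast h
    set C := ((Finset.Icc 1 Nn).filter (fun n =>
          t0 ≤ ∑ q ∈ (Finset.range (t0 + 1)).filter Nat.Prime, (n.factorization q))).card
    have h1 : (C * t0 : ℝ) ≤ (Nn : ℝ) * ∑ j ∈ Finset.range t0, (1:ℝ) / ((j:ℝ) + 1) := by
      have hnat := markov_count t0 Nn
      have hcast : (C * t0 : ℝ) ≤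
          ((∑ n ∈ Finset.Icc 1 Nn, ∑ q ∈ (Finset.range (t0 + 1)).filter Nat.Prime,
            (n.factorization q) : ℕ) : ℝ) := by exact_mod_cast hnat
      refine le_trans hcast ?_
      push_cast
      rw [Finset.sum_comm]
      calc ∑ q ∈ (Finset.range (t0 + 1)).filter Nat.Prime,
            ∑ n ∈ Finset.Icc 1 Nn, ((n.factorization q : ℕ) : ℝ)
          ≤ ∑ q ∈ (Finset.range (t0 + 1)).filter Nat.Prime, (Nn : ℝ) / ((q:ℝ) - 1) := by
            apply Finset.sum_le_sum
            intro q hq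
            exact sum_fact_le q Nn (Finset.mem_filter.1 hq).2
        _ = (Nn:ℝ) * ∑ q ∈ (Finset.range (t0 + 1)).filter Nat.Prime, (1:ℝ) / ((q:ℝ) - 1) := by
            rw [Finset.mul_sum]
            refine Finset.sum_congr rfl fun q _ => ?_
            ring
        _ ≤ (Nn:ℝ) * ∑ j ∈ Finset.range t0, (1:ℝ) / ((j:ℝ) + 1) :=
            mul_le_mul_of_nonneg_left (harmonic_bound t0) (Nat.cast_nonneg Nn)
    rw [inv_mul_le_iff₀ hNn, ← mul_div_assoc, le_div_iff₀ ht0]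
    exact_mod_cast h1

lemma term_le_one (t0 Nn : ℕ) :
    (Nn : ℝ)⁻¹ * ∑ n ∈ Finset.Icc 1 Nn, (Bset t0).indicator (fun _ => (1 : ℝ)) n ≤ 1 := by
  rcases Nat.eq_zero_or_pos Nn with h | h
  · subst h; simp
  · have hNn : (0:ℝ) < (Nn:ℝ) := by exact_mod_cast h
    have hsum : ∑ n ∈ Finset.Icc 1 Nn, (Bset t0).indicator (fun _ => (1 : ℝ)) n ≤ (Nn : ℝ) := by
      calc ∑ n ∈ Finset.Icc 1 Nn, (Bset t0).indicator (fun _ => (1 : ℝ)) n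
          ≤ ∑ _n ∈ Finset.Icc 1 Nn, (1:ℝ) := by
            classical
            apply Finset.sum_le_sum
            intro n _
            by_cases hm : n ∈ Bset t0
            · rw [Set.indicator_of_mem hm]
            · rw [Set.indicator_of_notMem hm]; norm_num
        _ = (Nn:ℝ) := by rw [Finset.sum_const, Nat.card_Icc]; simp
    rw [inv_mul_le_iff₀ hNn, mul_one]
    exact hsum

lemma harmonic_div_tendsto :
    Filter.Tendsto (fun k : ℕ => (∑ j ∈ Finset.range k, (1:ℝ) / ((j:ℝ) + 1)) / (k:ℝ))
      Filter.atTop (nhds 0) := by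
  have h := (tendsto_one_div_add_atTop_nhds_zero_nat).cesaro
  convert h using 2 with k
  rw [div_eq_inv_mul]


/-- Let `u` be in the MRT class with sequences `(t_m)`, `(s_m)`, and let `(N_m)` be an
increasing sequence of positive integers with `N_m ≤ t_{m+1}`. Then the proportion of those
`n ∈ {1, …, N_m}` for which `|u(n) − n^{i s_{m+1}}| > 1/t_m` is at most `ε_{t_m}`, and it
tends to `0` as `m → ∞`. -/
theorem mrt_bad_density (u : ℕ → ℂ) (t s : ℕ → ℕ) (hu : IsMRT u t s)
    (N : ℕ → ℕ) (hN : StrictMono N) (hNpos : ∀ m, 1 ≤ N m) (hNt : ∀ m, N m ≤ t (m + 1)) :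
    (∀ m, 1 ≤ m →
      (N m : ℝ)⁻¹ * ∑ n ∈ Finset.Icc 1 (N m),
          Set.indicator {k : ℕ | 1 / (t m : ℝ) < ‖u k - (k : ℂ) ^ ((s (m + 1) : ℂ) * Complex.I)‖}
            (fun _ => (1 : ℝ)) n
        ≤ eps (t m)) ∧
    Filter.Tendsto
      (fun m => (N m : ℝ)⁻¹ * ∑ n ∈ Finset.Icc 1 (N m),
          Set.indicator {k : ℕ | 1 / (t m : ℝ) < ‖u k - (k : ℂ) ^ ((s (m + 1) : ℂ) * Complex.I)‖}
            (fun _ => (1 : ℝ)) n)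
      atTop (𝓝 0) := by
  classical
  have hpart1 : ∀ m, 1 ≤ m →
      (N m : ℝ)⁻¹ * ∑ n ∈ Finset.Icc 1 (N m),
          Set.indicator {k : ℕ | 1 / (t m : ℝ) < ‖u k - (k : ℂ) ^ ((s (m + 1) : ℂ) * Complex.I)‖}
            (fun _ => (1 : ℝ)) n
        ≤ eps (t m) := by
    intro m hm
    have htm : (0:ℝ) < (t m : ℝ) := by exact_mod_cast hu.t_pos m
    -- pointwise comparison of indicators
    have hpoint : ∀ n ∈ Finset.Icc 1 (N m),
        Set.indicator {k : ℕ | 1 / (t m : ℝ) < ‖u k - (k : ℂ) ^ ((s (m + 1) : ℂ) * Complex.I)‖}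
          (fun _ => (1 : ℝ)) n ≤ (Bset (t m)).indicator (fun _ => (1 : ℝ)) n := by
      intro n hn
      rw [Finset.mem_Icc] at hn
      by_cases hbad : n ∈ {k : ℕ | 1 / (t m : ℝ) < ‖u k - (k : ℂ) ^ ((s (m + 1) : ℂ) * Complex.I)‖}
      · rw [Set.indicator_of_mem hbad]
        have hB : n ∈ Bset (t m) := by
          by_contra hnB
          simp only [Bset, Set.mem_setOf_eq, not_le] at hnB
          have hkey := key_bound u t s hu m hm n hn.1 (le_trans hn.2 (hNt m))
          have hlt : ((∑ q ∈ (Finset.range (t m + 1)).filter Nat.Prime,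
              (n.factorization q) : ℕ) : ℝ) / (t m : ℝ) ^ 2 < 1 / (t m : ℝ) := by
            rw [div_lt_div_iff₀ (by positivity) htm]
            have hle : ((∑ q ∈ (Finset.range (t m + 1)).filter Nat.Prime,
                (n.factorization q) : ℕ) : ℝ) ≤ (t m : ℝ) - 1 := by
              have : (∑ q ∈ (Finset.range (t m + 1)).filter Nat.Prime,
                  (n.factorization q) : ℕ) + 1 ≤ t m := hnB
              have := (Nat.cast_le (α := ℝ)).2 this
              push_cast at this ⊢
              linarith
            nlinarith
          have := hbad
          simp only [Set.mem_setOf_eq] at this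
          linarith [le_trans hkey (le_of_lt hlt)]
        rw [Set.indicator_of_mem hB]
      · rw [Set.indicator_of_notMem hbad]
        exact Set.indicator_nonneg (fun _ _ => zero_le_one) n
    have hsum : ∑ n ∈ Finset.Icc 1 (N m),
          Set.indicator {k : ℕ | 1 / (t m : ℝ) < ‖u k - (k : ℂ) ^ ((s (m + 1) : ℂ) * Complex.I)‖}
            (fun _ => (1 : ℝ)) n
        ≤ ∑ n ∈ Finset.Icc 1 (N m), (Bset (t m)).indicator (fun _ => (1 : ℝ)) n :=
      Finset.sum_le_sum hpoint
    have hstep : (N m : ℝ)⁻¹ * ∑ n ∈ Finset.Icc 1 (N m),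
          Set.indicator {k : ℕ | 1 / (t m : ℝ) < ‖u k - (k : ℂ) ^ ((s (m + 1) : ℂ) * Complex.I)‖}
            (fun _ => (1 : ℝ)) n
        ≤ (N m : ℝ)⁻¹ * ∑ n ∈ Finset.Icc 1 (N m), (Bset (t m)).indicator (fun _ => (1 : ℝ)) n :=
      mul_le_mul_of_nonneg_left hsum (by positivity)
    refine le_trans hstep ?_
    have hbdd : BddAbove (Set.range fun Nn : ℕ =>
        (Nn : ℝ)⁻¹ * ∑ n ∈ Finset.Icc 1 Nn, (Bset (t m)).indicator (fun _ => (1 : ℝ)) n) := by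
      refine ⟨1, ?_⟩
      rintro x ⟨Nn, rfl⟩
      exact term_le_one (t m) Nn
    exact le_ciSup hbdd (N m)
  refine ⟨hpart1, ?_⟩
  -- part 2 : squeeze
  have hlow : ∀ m : ℕ, (0:ℝ) ≤ (N m : ℝ)⁻¹ * ∑ n ∈ Finset.Icc 1 (N m),
      Set.indicator {k : ℕ | 1 / (t m : ℝ) < ‖u k - (k : ℂ) ^ ((s (m + 1) : ℂ) * Complex.I)‖}
        (fun _ => (1 : ℝ)) n := by
    intro m
    apply mul_nonneg (by positivity)
    apply Finset.sum_nonneg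
    intro n _
    exact Set.indicator_nonneg (fun _ _ => zero_le_one) n
  have hupper : ∀ᶠ m in atTop, (N m : ℝ)⁻¹ * ∑ n ∈ Finset.Icc 1 (N m),
      Set.indicator {k : ℕ | 1 / (t m : ℝ) < ‖u k - (k : ℂ) ^ ((s (m + 1) : ℂ) * Complex.I)‖}
        (fun _ => (1 : ℝ)) n
      ≤ (∑ j ∈ Finset.range (t m), (1:ℝ) / ((j:ℝ) + 1)) / (t m : ℝ) := by
    filter_upwards [Filter.eventually_ge_atTop 1] with m hm
    exact le_trans (hpart1 m hm) (eps_le (t m) (hu.t_pos m))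
  have hg : Filter.Tendsto (fun m : ℕ =>
      (∑ j ∈ Finset.range (t m), (1:ℝ) / ((j:ℝ) + 1)) / (t m : ℝ)) atTop (𝓝 0) :=
    harmonic_div_tendsto.comp hu.t_mono.tendsto_atTop
  exact tendsto_of_tendsto_of_tendsto_of_le_of_le' tendsto_const_nhds hg
    (Filter.Eventually.of_forall hlow) hupper
end
end

section
/- Let P and R be two nonzero polynomials (over ℝ), of degrees p and r respectively, with p ≠ r. Define the polynomial R̃ by R̃(n) := R(n+1)P(n) − R(n)P(n+1). Then the degree of R̃ is exactly r + p − 1, and its leading coefficient is (r − p)·a_P·a_R, where a_P and a_R are the leading coefficients of P and R. -/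
open Polynomial Finset

lemma aux_comp_coeff (S : ℝ[X]) (n : ℕ) :
    (S.comp (X + C 1)).coeff n = ∑ k ∈ Finset.range (S.natDegree + 1), S.coeff k * (k.choose n) := by
  rw [Polynomial.comp, eval₂_eq_sum_range, finset_sum_coeff]
  refine Finset.sum_congr rfl fun k _ => ?_
  rw [C_1, coeff_C_mul, coeff_X_add_one_pow]

lemma aux_comp_coeff_ge (S : ℝ[X]) (n : ℕ) (hn : S.natDegree ≤ n) :
    (S.comp (X + C 1)).coeff n = S.coeff n := by
  rw [aux_comp_coeff]
  rcases eq_or_lt_of_le hn with h | h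
  · rw [← h, Finset.sum_range_succ]
    have : ∀ k ∈ Finset.range S.natDegree, S.coeff k * (k.choose S.natDegree : ℝ) = 0 := by
      intro k hk
      rw [Nat.choose_eq_zero_of_lt (Finset.mem_range.mp hk)]
      simp
    rw [Finset.sum_eq_zero this, Nat.choose_self]
    simp
  · rw [coeff_eq_zero_of_natDegree_lt h]
    refine Finset.sum_eq_zero fun k hk => ?_
    rw [Nat.choose_eq_zero_of_lt (lt_of_le_of_lt (Nat.lt_succ_iff.mp (Finset.mem_range.mp hk)) h)]
    simp

lemma aux_sub_coeff_top (S : ℝ[X]) :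
    (S.comp (X + C 1) - S).coeff (S.natDegree - 1) = S.natDegree * S.leadingCoeff := by
  rcases Nat.eq_zero_or_pos S.natDegree with h | h
  · obtain ⟨a, rfl⟩ := Polynomial.natDegree_eq_zero.mp h
    simp
  · rw [coeff_sub, aux_comp_coeff]
    obtain ⟨s, hs⟩ : ∃ s, S.natDegree = s + 1 := ⟨S.natDegree - 1, (Nat.succ_pred_eq_of_pos h).symm⟩
    rw [hs]
    simp only [Nat.add_sub_cancel]
    rw [Finset.sum_range_succ, Finset.sum_range_succ]
    have : ∀ k ∈ Finset.range s, S.coeff k * (k.choose s : ℝ) = 0 := by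
      intro k hk
      rw [Nat.choose_eq_zero_of_lt (Finset.mem_range.mp hk)]; simp
    rw [Finset.sum_eq_zero this, Nat.choose_self, Nat.choose_succ_self_right, leadingCoeff, hs]
    push_cast
    ring

lemma aux_sub_natDegree_le (S : ℝ[X]) :
    (S.comp (X + C 1) - S).natDegree ≤ S.natDegree - 1 := by
  rcases Nat.eq_zero_or_pos S.natDegree with h | h
  · obtain ⟨a, rfl⟩ := Polynomial.natDegree_eq_zero.mp h
    simp
  · refine natDegree_le_iff_coeff_eq_zero.mpr fun m hm => ?_
    have : S.natDegree ≤ m := by omega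
    rw [coeff_sub, aux_comp_coeff_ge S m this, sub_self]

lemma aux_sub_zero (S : ℝ[X]) (h : S.natDegree = 0) : S.comp (X + C 1) - S = 0 := by
  obtain ⟨a, rfl⟩ := Polynomial.natDegree_eq_zero.mp h
  simp

/-- Let `P` and `R` be nonzero real polynomials of degrees `p ≠ r`, and let
`R̃(n) := R(n+1)P(n) − R(n)P(n+1)`. Then `R̃` has degree exactly `r + p − 1`, with leading
coefficient `(r − p)·a_P·a_R` where `a_P`, `a_R` are the leading coefficients of `P`, `R`. -/
theorem degree_of_twisted_difference (P R : Polynomial ℝ) (p r : ℕ)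
    (hP : P ≠ 0) (hR : R ≠ 0) (hPdeg : P.natDegree = p) (hRdeg : R.natDegree = r)
    (hpr : p ≠ r) :
    (R.comp (X + C 1) * P - R * P.comp (X + C 1)).natDegree = r + p - 1 ∧
      (R.comp (X + C 1) * P - R * P.comp (X + C 1)).leadingCoeff
        = ((r : ℝ) - (p : ℝ)) * P.leadingCoeff * R.leadingCoeff := by
  set DR := R.comp (X + C 1) - R with hDR
  set DP := P.comp (X + C 1) - P with hDP
  have hQ : R.comp (X + C 1) * P - R * P.comp (X + C 1) = DR * P - R * DP := by ring
  rw [hQ]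
  have hDRd : DR.natDegree ≤ r - 1 := hRdeg ▸ aux_sub_natDegree_le R
  have hDPd : DP.natDegree ≤ p - 1 := hPdeg ▸ aux_sub_natDegree_le P
  have hDRc : DR.coeff (r - 1) = r * R.leadingCoeff := by
    rw [hDR, ← hRdeg]; exact aux_sub_coeff_top R
  have hDPc : DP.coeff (p - 1) = p * P.leadingCoeff := by
    rw [hDP, ← hPdeg]; exact aux_sub_coeff_top P
  have c1 : (DR * P - R * DP).coeff (r + p - 1)
      = ((r : ℝ) - (p : ℝ)) * P.leadingCoeff * R.leadingCoeff := by
    rcases Nat.eq_zero_or_pos r with hr | hr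
    · have h0 : DR = 0 := aux_sub_zero R (hRdeg.trans hr)
      have hp1 : 1 ≤ p := by omega
      have e1 : r + p - 1 = r + (p - 1) := by omega
      rw [h0, zero_mul, zero_sub, coeff_neg, e1,
        coeff_mul_add_eq_of_natDegree_le hRdeg.le hDPd, hDPc, hr]
      have hc : R.coeff 0 = R.leadingCoeff := by rw [leadingCoeff, hRdeg, hr]
      rw [hc]
      push_cast
      ring
    · rcases Nat.eq_zero_or_pos p with hp | hp
      · have h0 : DP = 0 := aux_sub_zero P (hPdeg.trans hp)
        have e1 : r + p - 1 = (r - 1) + p := by omega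
        rw [h0, mul_zero, sub_zero, e1,
          coeff_mul_add_eq_of_natDegree_le hDRd hPdeg.le, hDRc, hp]
        have hc : P.coeff 0 = P.leadingCoeff := by rw [leadingCoeff, hPdeg, hp]
        rw [hc]
        push_cast
        ring
      · have e1 : r + p - 1 = (r - 1) + p := by omega
        have e2 : r + p - 1 = r + (p - 1) := by omega
        rw [coeff_sub]
        rw [show (DR * P).coeff (r + p - 1) = (DR * P).coeff ((r - 1) + p) from by rw [← e1]]
        rw [show (R * DP).coeff (r + p - 1) = (R * DP).coeff (r + (p - 1)) from by rw [← e2]]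
        rw [coeff_mul_add_eq_of_natDegree_le hDRd hPdeg.le,
          coeff_mul_add_eq_of_natDegree_le hRdeg.le hDPd, hDRc, hDPc, ← hPdeg, ← hRdeg,
          ← leadingCoeff, ← leadingCoeff]
        ring
  have hle : (DR * P - R * DP).natDegree ≤ r + p - 1 := by
    refine le_trans (natDegree_sub_le _ _) (max_le ?_ ?_)
    · rcases Nat.eq_zero_or_pos r with hr | hr
      · have h0 : DR = 0 := aux_sub_zero R (hRdeg.trans hr)
        rw [h0, zero_mul]; simp
      · refine le_trans (natDegree_mul_le) ?_
        have := hPdeg.le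
        omega
    · rcases Nat.eq_zero_or_pos p with hp | hp
      · have h0 : DP = 0 := aux_sub_zero P (hPdeg.trans hp)
        rw [h0, mul_zero]; simp
      · refine le_trans (natDegree_mul_le) ?_
        have := hRdeg.le
        omega
  have hne : (DR * P - R * DP).coeff (r + p - 1) ≠ 0 := by
    rw [c1]
    have h1 : (r : ℝ) - (p : ℝ) ≠ 0 := by
      have : (r : ℝ) ≠ (p : ℝ) := by exact_mod_cast hpr.symm
      exact sub_ne_zero.mpr this
    exact mul_ne_zero (mul_ne_zero h1 (leadingCoeff_ne_zero.mpr hP)) (leadingCoeff_ne_zero.mpr hR)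
  have hdeg : (DR * P - R * DP).natDegree = r + p - 1 :=
    le_antisymm hle (le_natDegree_of_ne_zero hne)
  refine ⟨hdeg, ?_⟩
  rw [leadingCoeff, hdeg, c1]
end

section
/- Define sequences of polynomials (P_d)_{d≥0} and (Q_d)_{d≥0} by P_0(n) = n, Q_0(n) = 1, and for each d ≥ 0: P_{d+1}(n) = P_d(n+1)·Q_d(n) and Q_{d+1}(n) = Q_d(n+1)·P_d(n). Then for each d ≥ 1, P_d and Q_d both have degree 2^{d−1}, and the difference R_d := Q_d − P_d has degree exactly 2^{d−1} − d. -/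
open Polynomial

noncomputable section

lemma comp_coeff (f : Polynomial ℝ) (k : ℕ) :
    (f.comp (X + C 1)).coeff k = ∑ i ∈ Finset.range (f.natDegree + 1), f.coeff i * (i.choose k : ℝ) := by
  rw [Polynomial.comp, Polynomial.eval₂_eq_sum_range, Polynomial.finset_sum_coeff]
  refine Finset.sum_congr rfl fun i _ => ?_
  rw [coeff_C_mul, map_one, coeff_X_add_one_pow]

lemma comp_coeff_pred (f : Polynomial ℝ) (ha : 1 ≤ f.natDegree) :
    (f.comp (X + C 1)).coeff (f.natDegree - 1)
      = f.coeff (f.natDegree - 1) + f.natDegree * f.coeff f.natDegree := by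
  set a := f.natDegree with hA
  rw [comp_coeff]
  have h2 : a + 1 = (a - 1) + 1 + 1 := by omega
  rw [h2, Finset.sum_range_succ, Finset.sum_range_succ]
  have h3 : ∑ i ∈ Finset.range (a - 1), f.coeff i * (i.choose (a-1) : ℝ) = 0 := by
    refine Finset.sum_eq_zero fun i hi => ?_
    rw [Nat.choose_eq_zero_of_lt (Finset.mem_range.mp hi)]
    simp
  have h4 : (a - 1) + 1 = a := by omega
  have h5 : a.choose (a - 1) = a := by
    rw [← Nat.choose_symm (by omega : a - 1 ≤ a)]
    have : a - (a - 1) = 1 := by omega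
    rw [this, Nat.choose_one_right]
  rw [h3, h4, Nat.choose_self, h5]
  push_cast
  ring

lemma natDegree_comp_X_add_one (f : Polynomial ℝ) :
    (f.comp (X + C 1)).natDegree = f.natDegree := by
  rw [natDegree_comp, natDegree_X_add_C, mul_one]

lemma comp_coeff_top (f : Polynomial ℝ) :
    (f.comp (X + C 1)).coeff f.natDegree = f.coeff f.natDegree := by
  rw [comp_coeff]
  rw [Finset.sum_range_succ]
  have h3 : ∑ i ∈ Finset.range f.natDegree, f.coeff i * (i.choose f.natDegree : ℝ) = 0 := by
    refine Finset.sum_eq_zero fun i hi => ?_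
    rw [Nat.choose_eq_zero_of_lt (Finset.mem_range.mp hi)]
    simp
  rw [h3, Nat.choose_self]
  simp

lemma coeff_mul_pred {p q : Polynomial ℝ} (ha : 1 ≤ p.natDegree) (hb : 1 ≤ q.natDegree) :
    (p * q).coeff (p.natDegree + q.natDegree - 1)
      = p.coeff p.natDegree * q.coeff (q.natDegree - 1)
        + p.coeff (p.natDegree - 1) * q.coeff q.natDegree := by
  set a := p.natDegree with hA
  set b := q.natDegree with hB
  rw [coeff_mul, Finset.Nat.sum_antidiagonal_eq_sum_range_succ_mk]
  have h1 : a + b - 1 + 1 = (a - 1) + 1 + 1 + (b - 1) := by omega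
  simp only [Nat.succ_eq_add_one]
  rw [h1, Finset.sum_range_add]
  have h2 : ∑ i ∈ Finset.range (b - 1),
      p.coeff ((a-1)+1+1 + i) * q.coeff (a + b - 1 - ((a-1)+1+1 + i)) = 0 := by
    refine Finset.sum_eq_zero fun i _ => ?_
    rw [coeff_eq_zero_of_natDegree_lt (by omega : a < (a-1)+1+1+i)]
    simp
  rw [h2, add_zero, Finset.sum_range_succ, Finset.sum_range_succ]
  have h3 : ∑ i ∈ Finset.range (a - 1), p.coeff i * q.coeff (a + b - 1 - i) = 0 := by
    refine Finset.sum_eq_zero fun i hi => ?_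
    have hi' := Finset.mem_range.mp hi
    rw [coeff_eq_zero_of_natDegree_lt (show b < a + b - 1 - i by omega), mul_zero]
  have e1 : (a - 1) + 1 = a := by omega
  have e2 : a + b - 1 - (a - 1) = b := by omega
  have e3 : a + b - 1 - a = b - 1 := by omega
  rw [h3, e1, e2, e3, zero_add]
  ring

lemma key {f g : Polynomial ℝ} (hf : f ≠ 0) (hg : g ≠ 0) (hab : f.natDegree < g.natDegree) :
    f.comp (X + C 1) * g - g.comp (X + C 1) * f ≠ 0 ∧
    (f.comp (X + C 1) * g - g.comp (X + C 1) * f).natDegree = f.natDegree + g.natDegree - 1 := by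
  set a := f.natDegree with hA
  set b := g.natDegree with hB
  have hb1 : 1 ≤ b := by omega
  set F := f.comp (X + C 1) with hFdef
  set G := g.comp (X + C 1) with hGdef
  have hFd : F.natDegree = a := natDegree_comp_X_add_one f
  have hGd : G.natDegree = b := natDegree_comp_X_add_one g
  have hFa : F.coeff a = f.coeff a := comp_coeff_top f
  have hGb : G.coeff b = g.coeff b := comp_coeff_top g
  have hfa : f.coeff a ≠ 0 := by
    rw [hA]; exact fun hc => hf (leadingCoeff_eq_zero.mp hc)
  have hgb : g.coeff b ≠ 0 := by
    rw [hB]; exact fun hc => hg (leadingCoeff_eq_zero.mp hc)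
  set h := F * g - G * f with hH
  have hGpred : G.coeff (b - 1) = g.coeff (b - 1) + b * g.coeff b := comp_coeff_pred g hb1
  have hcoeff : h.coeff (a + b - 1) = ((a : ℝ) - b) * (f.coeff a * g.coeff b) := by
    rcases Nat.eq_zero_or_pos a with ha0 | ha1
    · -- f is a nonzero constant
      have hfc : f = C (f.coeff 0) := eq_C_of_natDegree_eq_zero (hA ▸ ha0)
      have hFc : F = C (f.coeff 0) := by rw [hFdef, hfc]; simp
      have e1 : a + b - 1 = b - 1 := by omega
      rw [hH, coeff_sub, e1, hFc]
      nth_rewrite 2 [hfc]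
      rw [coeff_C_mul, coeff_mul_C, hGpred, ha0]
      push_cast
      ring
    · have hFpred : F.coeff (a - 1) = f.coeff (a - 1) + a * f.coeff a := comp_coeff_pred f ha1
      have h1 : (F * g).coeff (a + b - 1)
          = F.coeff a * g.coeff (b - 1) + F.coeff (a - 1) * g.coeff b := by
        have := coeff_mul_pred (p := F) (q := g) (by omega) (by omega)
        rwa [hFd, ← hB] at this
      have h2 : (G * f).coeff (a + b - 1)
          = G.coeff b * f.coeff (a - 1) + G.coeff (b - 1) * f.coeff a := by
        have := coeff_mul_pred (p := G) (q := f) (by omega) (by omega)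
        rw [hGd, ← hA] at this
        rw [show a + b - 1 = b + a - 1 by omega, this]
      rw [hH, coeff_sub, h1, h2, hFa, hFpred, hGb, hGpred]
      ring
  have hne : h.coeff (a + b - 1) ≠ 0 := by
    rw [hcoeff]
    have : (a : ℝ) - b ≠ 0 := by
      have : (a : ℝ) < b := by exact_mod_cast hab
      linarith
    exact mul_ne_zero this (mul_ne_zero hfa hgb)
  have h0 : h ≠ 0 := fun hc => hne (by rw [hc]; simp)
  have hle : h.natDegree ≤ a + b - 1 := by
    rw [natDegree_le_iff_coeff_eq_zero]
    intro m hm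
    rcases eq_or_lt_of_le (show a + b ≤ m by omega) with hm' | hm'
    · rw [hH, coeff_sub]
      have lcF : F.leadingCoeff = f.coeff a := by rw [← coeff_natDegree, hFd, hFa]
      have lcG : G.leadingCoeff = g.coeff b := by rw [← coeff_natDegree, hGd, hGb]
      have lcf : f.leadingCoeff = f.coeff a := by rw [← coeff_natDegree, ← hA]
      have lcg : g.leadingCoeff = g.coeff b := by rw [← coeff_natDegree, ← hB]
      have c1 : (F * g).coeff (a + b) = f.coeff a * g.coeff b := by
        have := coeff_mul_degree_add_degree F g
        rwa [hFd, ← hB, lcF, lcg] at this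
      have c2 : (G * f).coeff (a + b) = f.coeff a * g.coeff b := by
        have := coeff_mul_degree_add_degree G f
        rw [hGd, ← hA, lcG, lcf] at this
        rw [show a + b = b + a by omega, this]
        ring
      rw [← hm', c1, c2, sub_self]
    · rw [hH, coeff_sub]
      have c1 : (F * g).coeff m = 0 := by
        apply coeff_eq_zero_of_natDegree_lt
        calc (F * g).natDegree ≤ F.natDegree + g.natDegree := natDegree_mul_le
          _ < m := by rw [hFd, ← hB]; omega
      have c2 : (G * f).coeff m = 0 := by
        apply coeff_eq_zero_of_natDegree_lt
        calc (G * f).natDegree ≤ G.natDegree + f.natDegree := natDegree_mul_le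
          _ < m := by rw [hGd, ← hA]; omega
      rw [c1, c2, sub_self]
  exact ⟨h0, le_antisymm hle (le_natDegree_of_ne_zero hne)⟩

lemma comp_X_add_one_ne_zero {p : Polynomial ℝ} (hp : p ≠ 0) : p.comp (X + C 1) ≠ 0 := by
  intro hc
  have h := comp_coeff_top p
  rw [hc, coeff_zero] at h
  exact hp (leadingCoeff_eq_zero.mp h.symm)

/-- The pair of polynomial sequences `(P_d, Q_d)`: `P_0(n) = n`, `Q_0(n) = 1`,
`P_{d+1}(n) = P_d(n+1)·Q_d(n)` and `Q_{d+1}(n) = Q_d(n+1)·P_d(n)`. -/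
def PQ : ℕ → Polynomial ℝ × Polynomial ℝ
  | 0 => (X, 1)
  | d + 1 => ((PQ d).1.comp (X + C 1) * (PQ d).2, (PQ d).2.comp (X + C 1) * (PQ d).1)

/-- For each `d ≥ 1`, `P_d` and `Q_d` both have degree `2^(d−1)`, and the difference
`R_d = Q_d − P_d` is nonzero of degree exactly `2^(d−1) − d`. -/
theorem degrees_of_PQ (d : ℕ) (hd : 1 ≤ d) :
    (PQ d).1.natDegree = 2 ^ (d - 1) ∧ (PQ d).2.natDegree = 2 ^ (d - 1) ∧
      (PQ d).2 - (PQ d).1 ≠ 0 ∧ ((PQ d).2 - (PQ d).1).natDegree = 2 ^ (d - 1) - d := by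
  induction d, hd using Nat.le_induction with
  | base =>
    have h1 : (PQ 1).1 = X + C 1 := by simp [PQ]
    have h2 : (PQ 1).2 = X := by simp [PQ]
    have h3 : (PQ 1).2 - (PQ 1).1 = -C 1 := by rw [h1, h2]; ring
    refine ⟨?_, ?_, ?_, ?_⟩
    · rw [h1]; simpa using natDegree_X_add_C (1 : ℝ)
    · rw [h2]; simp
    · rw [h3]; simp
    · rw [h3]; simp
  | succ d hd ih =>
    obtain ⟨hP, hQ, hR0, hRd⟩ := ih
    set P := (PQ d).1 with hPdef
    set Q := (PQ d).2 with hQdef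
    set R := Q - P with hRdef
    have hpow1 : 1 ≤ 2 ^ (d - 1) := Nat.one_le_two_pow
    have hdA : d ≤ 2 ^ (d - 1) := by
      have := Nat.lt_two_pow_self (n := d - 1)
      omega
    have hpow2 : 2 ^ d = 2 * 2 ^ (d - 1) := by
      rw [← pow_succ']
      congr 1
      omega
    have hPne : P ≠ 0 := by
      intro hc
      rw [hc, natDegree_zero] at hP
      omega
    have hQne : Q ≠ 0 := by
      intro hc
      rw [hc, natDegree_zero] at hQ
      omega
    have hab : R.natDegree < P.natDegree := by rw [hP, hRd]; omega
    obtain ⟨hk0, hkd⟩ := key hR0 hPne hab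
    have hmatch : (PQ (d + 1)).2 - (PQ (d + 1)).1
        = R.comp (X + C 1) * P - P.comp (X + C 1) * R := by
      show Q.comp (X + C 1) * P - P.comp (X + C 1) * Q = _
      rw [hRdef, sub_comp]
      ring
    have hP' : (PQ (d + 1)).1.natDegree = 2 ^ d := by
      show (P.comp (X + C 1) * Q).natDegree = 2 ^ d
      rw [natDegree_mul (comp_X_add_one_ne_zero hPne) hQne, natDegree_comp_X_add_one, hP, hQ]
      omega
    have hQ' : (PQ (d + 1)).2.natDegree = 2 ^ d := by
      show (Q.comp (X + C 1) * P).natDegree = 2 ^ d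
      rw [natDegree_mul (comp_X_add_one_ne_zero hQne) hPne, natDegree_comp_X_add_one, hP, hQ]
      omega
    have e : d + 1 - 1 = d := by omega
    rw [e]
    refine ⟨hP', hQ', ?_, ?_⟩
    · rw [hmatch]; exact hk0
    · rw [hmatch, hkd, hRd, hP]
      omega
end
end

section
/- Let f_d(x) := log( P_d(x) / Q_d(x) ), which is well defined for x real and sufficiently large. Then: (i) for each d ≥ 1 there exists a nonzero constant K_d such that f_d(x) ~ K_d / x^d as x → ∞; (ii) for each d ≥ 0 there exists a nonzero constant L_d such that f′_d(x) ~ L_d / x^{d+1} as x → ∞; (iii) for each d ≥ 0 there exists H_d > 0 such that f′_d is monotone on [H_d, +∞). -/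
open Polynomial Filter Asymptotics

noncomputable section

/-- `f_d(x) = log (P_d(x)/Q_d(x))`, well defined for `x` large enough. -/
def fd (d : ℕ) (x : ℝ) : ℝ := Real.log ((PQ d).1.eval x / (PQ d).2.eval x)

/-- The product `x(x+1)⋯(x+d)`. -/
def Pp (d : ℕ) (x : ℝ) : ℝ := ∏ k ∈ Finset.range (d + 1), (x + (k : ℝ))

/-- `g d` will be the derivative of `fd d` on `(0,∞)`. -/
def gg (d : ℕ) (x : ℝ) : ℝ := ((-1 : ℝ) ^ d * (d.factorial : ℝ)) / Pp d x

lemma Pp_pos {d : ℕ} {x : ℝ} (hx : 0 < x) : 0 < Pp d x :=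
  Finset.prod_pos fun k _ => by positivity

lemma Pp_succ (d : ℕ) (x : ℝ) : Pp (d + 1) x = Pp d x * (x + (d + 1 : ℕ)) :=
  Finset.prod_range_succ _ _

lemma Pp_succ' (d : ℕ) (x : ℝ) : Pp (d + 1) x = Pp d (x + 1) * x := by
  rw [Pp, Finset.prod_range_succ']
  simp only [Nat.cast_add, Nat.cast_one, Pp]
  ring_nf

lemma Pp_mono {d : ℕ} {x y : ℝ} (hx : 0 < x) (hxy : x ≤ y) : Pp d x ≤ Pp d y := by
  refine Finset.prod_le_prod (fun k _ => by positivity) fun k _ => by linarith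

lemma PQ_pos (d : ℕ) {x : ℝ} (hx : 0 < x) :
    0 < ((PQ d).1.eval x) ∧ 0 < ((PQ d).2.eval x) := by
  induction d generalizing x with
  | zero => simpa [PQ] using hx
  | succ d ih =>
    have h1 := ih hx
    have h2 := ih (by linarith : (0:ℝ) < x + 1)
    simp only [PQ, eval_mul, eval_comp, eval_add, eval_X, eval_C]
    exact ⟨mul_pos h2.1 h1.2, mul_pos h2.2 h1.1⟩

lemma fd_succ (d : ℕ) {x : ℝ} (hx : 0 < x) : fd (d + 1) x = fd d (x + 1) - fd d x := by
  have h1 := PQ_pos d hx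
  have h2 := PQ_pos d (by linarith : (0:ℝ) < x + 1)
  obtain ⟨hp1, hq1⟩ := h1
  obtain ⟨hp2, hq2⟩ := h2
  simp only [fd, PQ, eval_mul, eval_comp, eval_add, eval_X, eval_C]
  have harg : eval (x+1) (PQ d).1 * eval x (PQ d).2 / (eval (x+1) (PQ d).2 * eval x (PQ d).1)
      = (eval (x+1) (PQ d).1 / eval (x+1) (PQ d).2) / (eval x (PQ d).1 / eval x (PQ d).2) := by
    field_simp
    try ring
  rw [harg, Real.log_div (by positivity) (by positivity)]

lemma gg_succ (d : ℕ) {x : ℝ} (hx : 0 < x) : gg d (x + 1) - gg d x = gg (d + 1) x := by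
  have hA : Pp d x ≠ 0 := (Pp_pos hx).ne'
  have hB : Pp d (x + 1) ≠ 0 := (Pp_pos (by linarith : (0:ℝ) < x + 1)).ne'
  have key : Pp d (x + 1) * x = Pp d x * (x + (d + 1 : ℕ)) := by
    rw [← Pp_succ', Pp_succ]
  simp only [gg, Pp_succ]
  have hx' : x ≠ 0 := hx.ne'
  rw [Nat.factorial_succ]
  push_cast
  field_simp
  push_cast at key
  linear_combination (-((-1:ℝ)^d)) * key

lemma hasDerivAt_fd (d : ℕ) {x : ℝ} (hx : 0 < x) : HasDerivAt (fd d) (gg d x) x := by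
  induction d generalizing x with
  | zero =>
    have h : HasDerivAt Real.log x⁻¹ x := Real.hasDerivAt_log hx.ne'
    have he : fd 0 = Real.log := by
      funext y; simp [fd, PQ]
    have : gg 0 x = x⁻¹ := by simp [gg, Pp]
    rw [he, this]; exact h
  | succ d ih =>
    have h1 : HasDerivAt (fun y => fd d (y + 1)) (gg d (x + 1)) x := by
      have := (ih (show (0:ℝ) < x + 1 by linarith)).comp x
        ((hasDerivAt_id x).add_const 1)
      rw [mul_one] at this
      exact this
    have h2 := ih hx
    have h3 : HasDerivAt (fun y => fd d (y + 1) - fd d y) (gg d (x + 1) - gg d x) x := h1.sub h2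
    rw [gg_succ d hx] at h3
    refine h3.congr_of_eventuallyEq ?_
    filter_upwards [Ioi_mem_nhds hx] with y hy using fd_succ d hy



lemma deriv_fd (d : ℕ) {x : ℝ} (hx : 0 < x) : deriv (fd d) x = gg d x :=
  (hasDerivAt_fd d hx).deriv

lemma shift_equiv (c : ℝ) : (fun x : ℝ => x + c) ~[atTop] (fun x : ℝ => x) := by
  have h0 : (fun _ : ℝ => c) =o[atTop] (fun x : ℝ => x) := isLittleO_const_id_atTop c
  have h : ((fun x : ℝ => x) + fun _ => c) ~[atTop] (fun x : ℝ => x) :=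
    IsEquivalent.refl.add_isLittleO h0
  exact h.congr_left (Filter.Eventually.of_forall fun x => by simp)

lemma Pp_equiv (d : ℕ) : (fun x => Pp d x) ~[atTop] (fun x => x ^ (d + 1)) := by
  induction d with
  | zero =>
    have : (fun x : ℝ => Pp 0 x) = fun x : ℝ => x + 0 := by
      funext x; simp [Pp]
    rw [this]
    exact (shift_equiv 0).congr_right (Filter.Eventually.of_forall fun x => by simp)
  | succ d ih =>
    have h : (fun x => Pp d x * (x + ((d:ℝ) + 1))) ~[atTop]
        (fun x : ℝ => x ^ (d + 1) * x) := ih.mul (shift_equiv ((d:ℝ) + 1))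
    have h2 : (fun x => Pp (d + 1) x) = fun x => Pp d x * (x + ((d:ℝ) + 1)) := by
      funext x; rw [Pp_succ]; push_cast; ring
    rw [h2]
    exact h.congr_right (Filter.Eventually.of_forall fun x => by simp [pow_succ])

lemma gg_equiv (d : ℕ) :
    (gg d) ~[atTop] (fun x => ((-1 : ℝ) ^ d * (d.factorial : ℝ)) / x ^ (d + 1)) := by
  have h := (IsEquivalent.refl (u := fun _ : ℝ => ((-1 : ℝ) ^ d * (d.factorial : ℝ)))).mul
    (Pp_equiv d).inv
  refine (h.congr_left ?_).congr_right ?_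
  · exact Filter.Eventually.of_forall fun x => by simp [gg, div_eq_mul_inv]
  · exact Filter.Eventually.of_forall fun x => by simp [div_eq_mul_inv]

lemma gg_between (d : ℕ) {x c y : ℝ} (hx : 0 < x) (h1 : x ≤ c) (h2 : c ≤ y) :
    min (gg d x) (gg d y) ≤ gg d c ∧ gg d c ≤ max (gg d x) (gg d y) := by
  have hc : 0 < c := lt_of_lt_of_le hx h1
  have hPx := Pp_pos (d := d) hx
  have hPc := Pp_pos (d := d) hc
  have hPy := Pp_pos (d := d) (lt_of_lt_of_le hc h2)
  have m1 : Pp d x ≤ Pp d c := Pp_mono hx h1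
  have m2 : Pp d c ≤ Pp d y := Pp_mono hc h2
  have hf : (0 : ℝ) ≤ (d.factorial : ℝ) := by positivity
  rcases Nat.even_or_odd d with he | ho
  · simp only [gg, he.neg_one_pow, one_mul]
    exact ⟨le_trans (min_le_right _ _) (by gcongr), le_trans (by gcongr) (le_max_left _ _)⟩
  · simp only [gg, ho.neg_one_pow, neg_one_mul, neg_div]
    rw [min_neg_neg, max_neg_neg]
    constructor
    · rw [neg_le_neg_iff]
      exact le_trans (by gcongr) (le_max_left _ _)
    · rw [neg_le_neg_iff]
      exact le_trans (min_le_right _ _) (by gcongr)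

lemma between_mul {p q r t : ℝ} (h1 : min q r ≤ p) (h2 : p ≤ max q r) :
    min (q * t) (r * t) ≤ p * t ∧ p * t ≤ max (q * t) (r * t) := by
  rcases le_total 0 t with ht | ht
  · rw [← min_mul_of_nonneg _ _ ht, ← max_mul_of_nonneg _ _ ht]
    exact ⟨mul_le_mul_of_nonneg_right h1 ht, mul_le_mul_of_nonneg_right h2 ht⟩
  · constructor
    · refine le_trans ?_ (mul_le_mul_of_nonpos_right h2 ht)
      rcases max_cases q r with ⟨h, _⟩ | ⟨h, _⟩ <;> rw [h]
      · exact min_le_left _ _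
      · exact min_le_right _ _
    · refine le_trans (mul_le_mul_of_nonpos_right h1 ht) ?_
      rcases min_cases q r with ⟨h, _⟩ | ⟨h, _⟩ <;> rw [h]
      · exact le_max_left _ _
      · exact le_max_right _ _

/-- Asymptotics of `f_d`: (i) for `d ≥ 1`, `f_d(x) ~ K_d/x^d` at `+∞` for some `K_d ≠ 0`;
(ii) `f_d'(x) ~ L_d/x^(d+1)` at `+∞` for some `L_d ≠ 0`; (iii) `f_d'` is monotone on some
half-line `[H_d, ∞)` with `H_d > 0`. -/
theorem fd_asymptotics (d : ℕ) :
    (1 ≤ d → ∃ K : ℝ, K ≠ 0 ∧ (fd d) ~[atTop] (fun x => K / x ^ d)) ∧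
      (∃ L : ℝ, L ≠ 0 ∧ (deriv (fd d)) ~[atTop] (fun x => L / x ^ (d + 1))) ∧
      (∃ H : ℝ, 0 < H ∧
        (MonotoneOn (deriv (fd d)) (Set.Ici H) ∨ AntitoneOn (deriv (fd d)) (Set.Ici H))) := by
  refine ⟨?_, ?_, ?_⟩
  · -- part (i)
    intro hd
    obtain ⟨e, rfl⟩ : ∃ e, d = e + 1 := ⟨d - 1, (Nat.succ_pred_eq_of_pos hd).symm⟩
    set K : ℝ := (-1 : ℝ) ^ e * (e.factorial : ℝ) with hK
    have hK0 : K ≠ 0 :=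
      mul_ne_zero (pow_ne_zero _ (by norm_num)) (Nat.cast_ne_zero.2 e.factorial_ne_zero)
    have hz : ∀ᶠ x : ℝ in atTop, K / x ^ (e + 1) ≠ 0 := by
      filter_upwards [eventually_gt_atTop (0 : ℝ)] with x hx
      exact div_ne_zero hK0 (pow_ne_zero _ hx.ne')
    have hta0 := (isEquivalent_iff_tendsto_one hz).1 (gg_equiv e)
    have ta : Tendsto (fun x : ℝ => gg e x * (x ^ (e + 1) / K)) atTop (nhds 1) := by
      refine Filter.Tendsto.congr' (Filter.Eventually.of_forall fun x => ?_) hta0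
      show gg e x / (K / x ^ (e + 1)) = _
      rw [div_div_eq_mul_div, mul_div_assoc]
    have hshift : Tendsto (fun x : ℝ => x + 1) atTop atTop :=
      tendsto_atTop_add_const_right _ 1 tendsto_id
    have ta' : Tendsto (fun x : ℝ => gg e (x + 1) * ((x + 1) ^ (e + 1) / K)) atTop (nhds 1) :=
      ta.comp hshift
    have tr : Tendsto (fun x : ℝ => x ^ (e + 1) / (x + 1) ^ (e + 1)) atTop (nhds 1) := by
      have hz2 : ∀ᶠ x : ℝ in atTop, x + 1 ≠ 0 := by
        filter_upwards [eventually_gt_atTop (0 : ℝ)] with x hx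
        positivity
      have h1 : Tendsto (fun x : ℝ => x / (x + 1)) atTop (nhds 1) :=
        (isEquivalent_iff_tendsto_one hz2).1 (shift_equiv 1).symm
      have h2 := h1.pow (e + 1)
      simpa [div_pow] using h2
    have tb : Tendsto (fun x : ℝ => gg e (x + 1) * (x ^ (e + 1) / K)) atTop (nhds 1) := by
      have h := ta'.mul tr
      rw [mul_one] at h
      refine Filter.Tendsto.congr' ?_ h
      filter_upwards [eventually_gt_atTop (0 : ℝ)] with x hx
      have hx1 : (0:ℝ) < x + 1 := by linarith
      field_simp
    have hsq : ∀ᶠ x : ℝ in atTop,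
        (min (gg e x * (x ^ (e + 1) / K)) (gg e (x + 1) * (x ^ (e + 1) / K)) ≤
          fd (e + 1) x * (x ^ (e + 1) / K)) ∧
        (fd (e + 1) x * (x ^ (e + 1) / K) ≤
          max (gg e x * (x ^ (e + 1) / K)) (gg e (x + 1) * (x ^ (e + 1) / K))) := by
      filter_upwards [eventually_gt_atTop (0 : ℝ)] with x hx
      obtain ⟨c, hc, hgc⟩ := exists_hasDerivAt_eq_slope (fd e) (gg e) (by linarith : x < x + 1)
        (fun y hy => ((hasDerivAt_fd e (lt_of_lt_of_le hx hy.1)).continuousAt).continuousWithinAt)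
        (fun y hy => hasDerivAt_fd e (lt_trans hx hy.1))
      rw [show x + 1 - x = (1:ℝ) by ring, div_one, ← fd_succ e hx] at hgc
      obtain ⟨hb1, hb2⟩ := gg_between e hx hc.1.le hc.2.le
      have h := between_mul (t := x ^ (e + 1) / K) hb1 hb2
      rw [hgc] at h
      exact h
    have hmin : Tendsto (fun x : ℝ =>
        min (gg e x * (x ^ (e + 1) / K)) (gg e (x + 1) * (x ^ (e + 1) / K))) atTop (nhds 1) := by
      have := ta.min tb; rwa [min_self] at this
    have hmax : Tendsto (fun x : ℝ =>
        max (gg e x * (x ^ (e + 1) / K)) (gg e (x + 1) * (x ^ (e + 1) / K))) atTop (nhds 1) := by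
      have := ta.max tb; rwa [max_self] at this
    have hF : Tendsto (fun x : ℝ => fd (e + 1) x * (x ^ (e + 1) / K)) atTop (nhds 1) :=
      tendsto_of_tendsto_of_tendsto_of_le_of_le' hmin hmax
        (hsq.mono fun x h => h.1) (hsq.mono fun x h => h.2)
    refine ⟨K, hK0, (isEquivalent_iff_tendsto_one hz).2 ?_⟩
    refine Filter.Tendsto.congr' (Filter.Eventually.of_forall fun x => ?_) hF
    show fd (e + 1) x * (x ^ (e + 1) / K) = fd (e + 1) x / (K / x ^ (e + 1))
    rw [div_div_eq_mul_div, mul_div_assoc]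
  · -- part (ii)
    refine ⟨(-1 : ℝ) ^ d * (d.factorial : ℝ),
      mul_ne_zero (pow_ne_zero _ (by norm_num)) (Nat.cast_ne_zero.2 d.factorial_ne_zero), ?_⟩
    refine IsEquivalent.congr_left (gg_equiv d) ?_
    filter_upwards [eventually_gt_atTop (0 : ℝ)] with x hx using (deriv_fd d hx).symm
  · -- part (iii)
    refine ⟨1, one_pos, ?_⟩
    rcases Nat.even_or_odd d with he | ho
    · right
      intro a ha b hb hab
      have ha0 : (0:ℝ) < a := lt_of_lt_of_le one_pos ha
      have hb0 : (0:ℝ) < b := lt_of_lt_of_le one_pos hb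
      rw [deriv_fd d ha0, deriv_fd d hb0]
      simp only [gg, he.neg_one_pow, one_mul]
      have hm := Pp_mono (d := d) ha0 hab
      have hpa := Pp_pos (d := d) ha0
      gcongr
    · left
      intro a ha b hb hab
      have ha0 : (0:ℝ) < a := lt_of_lt_of_le one_pos ha
      have hb0 : (0:ℝ) < b := lt_of_lt_of_le one_pos hb
      rw [deriv_fd d ha0, deriv_fd d hb0]
      simp only [gg, ho.neg_one_pow, neg_one_mul, neg_div]
      rw [neg_le_neg_iff]
      have hm := Pp_mono (d := d) ha0 hab
      have hpa := Pp_pos (d := d) ha0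
      gcongr
end
end

section
/- (Kusmin–Landau) Let a < b be real numbers, let f : [a,b] → ℝ be continuously differentiable with f′ monotone on [a,b], and suppose there exists λ₁ > 0 such that ‖f′(x)‖ ≥ λ₁ for all x ∈ [a,b], where ‖y‖ denotes the distance from the real number y to the nearest integer. Then | Σ_{n ∈ [a,b] ∩ ℤ} e^{2πi f(n)} | ≤ 2/(π λ₁). -/
open Real


lemma KL_bound1 (lam θ : ℝ) (h0 : 0 < lam) (hl : lam ≤ θ) (hu : θ ≤ 1 - lam) :
    (1 + Real.cos (π * θ)) / (2 * Real.sin (π * θ)) ≤ 1 / (π * lam) := by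
  have hpi := Real.pi_pos
  have hθ0 : 0 < θ := lt_of_lt_of_le h0 hl
  have hθ1 : θ < 1 := by linarith
  have ht0 : 0 < π * θ / 2 := by positivity
  have ht2 : π * θ / 2 < π / 2 := by nlinarith
  have hcos : 0 < Real.cos (π * θ / 2) := Real.cos_pos_of_mem_Ioo ⟨by linarith, ht2⟩
  have hsin : 0 < Real.sin (π * θ / 2) := Real.sin_pos_of_pos_of_lt_pi ht0 (by linarith)
  have hsinx : 0 < Real.sin (π * θ) := Real.sin_pos_of_pos_of_lt_pi (by positivity) (by nlinarith)
  have htan : π * θ / 2 ≤ Real.tan (π * θ / 2) := Real.le_tan ht0.le ht2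
  rw [Real.tan_eq_sin_div_cos, le_div_iff₀ hcos] at htan
  have hx : π * θ = 2 * (π * θ / 2) := by ring
  have hc2 : Real.cos (π * θ) = 2 * Real.cos (π * θ / 2) ^ 2 - 1 := by
    rw [hx, Real.cos_two_mul]; norm_num
  have hs2 : Real.sin (π * θ) = 2 * Real.sin (π * θ / 2) * Real.cos (π * θ / 2) := by
    rw [hx, Real.sin_two_mul]; norm_num
  rw [div_le_div_iff₀ (by positivity) (by positivity)]
  have key : π * lam / 2 * Real.cos (π * θ / 2) ≤ Real.sin (π * θ / 2) := by
    have h1 : π * lam / 2 ≤ π * θ / 2 := by nlinarith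
    exact le_trans (mul_le_mul_of_nonneg_right h1 hcos.le) htan
  nlinarith [sq_nonneg (Real.cos (π * θ / 2)), mul_le_mul_of_nonneg_right key hcos.le]

lemma KL_bound2 (lam θ : ℝ) (h0 : 0 < lam) (hl : lam ≤ θ) (hu : θ ≤ 1 - lam) :
    (1 - Real.cos (π * θ)) / (2 * Real.sin (π * θ)) ≤ 1 / (π * lam) := by
  have := KL_bound1 lam (1 - θ) h0 (by linarith) (by linarith)
  have h1 : π * (1 - θ) = π - π * θ := by ring
  rw [h1, Real.cos_pi_sub, Real.sin_pi_sub] at this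
  rw [sub_eq_add_neg]
  exact this

noncomputable def KLw (θ : ℝ) : ℂ :=
  (-1/2 : ℂ) - ((Real.cos (π * θ) / (2 * Real.sin (π * θ)) : ℝ) : ℂ) * Complex.I

lemma KL_w_eq (θ : ℝ) (hs : Real.sin (π * θ) ≠ 0) :
    (Complex.exp (2 * π * Complex.I * (θ : ℂ)) - 1)⁻¹ = KLw θ := by
  set s := Real.sin (π * θ) with hs_def
  set c := Real.cos (π * θ) with hc_def
  have hsC : (s : ℂ) ≠ 0 := by exact_mod_cast hs
  have hscC : (s : ℂ)^2 + (c : ℂ)^2 = 1 := by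
    have := Real.sin_sq_add_cos_sq (π * θ); exact_mod_cast this
  have hexp : Complex.exp (2 * π * Complex.I * (θ : ℂ))
      = ((Real.cos (2 * (π * θ)) : ℝ) : ℂ) + ((Real.sin (2 * (π * θ)) : ℝ) : ℂ) * Complex.I := by
    rw [show (2 * (π:ℂ) * Complex.I * (θ:ℂ)) = ((2 * (π * θ) : ℝ) : ℂ) * Complex.I by
      push_cast; ring]
    rw [Complex.exp_mul_I]
    norm_cast
  have hc2 : Real.cos (2 * (π * θ)) = 1 - 2 * s ^ 2 := by
    rw [Real.cos_two_mul']; nlinarith [Real.sin_sq_add_cos_sq (π * θ)]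
  have hs2 : Real.sin (2 * (π * θ)) = 2 * s * c := Real.sin_two_mul _
  have key : (Complex.exp (2 * π * Complex.I * (θ : ℂ)) - 1) * (-(s:ℂ) - (c:ℂ) * Complex.I)
      = 2 * (s:ℂ) := by
    rw [hexp, hc2, hs2]
    push_cast
    linear_combination (-2*(s:ℂ)*(c:ℂ)^2) * Complex.I_sq + (2*(s:ℂ)) * hscC
  have hw : KLw θ = (-(s:ℂ) - (c:ℂ) * Complex.I) * (2 * (s:ℂ))⁻¹ := by
    rw [KLw, ← hs_def, ← hc_def]
    push_cast
    field_simp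
  refine inv_eq_of_mul_eq_one_right ?_
  rw [hw, ← mul_assoc, key]
  exact mul_inv_cancel₀ (by simpa using hsC)

lemma KL_w_norm (θ : ℝ) (hs : 0 < Real.sin (π * θ)) : ‖KLw θ‖ = 1 / (2 * Real.sin (π * θ)) := by
  have h : KLw θ = ((-1/2 : ℝ) : ℂ) + ((-(Real.cos (π * θ) / (2 * Real.sin (π * θ)))) : ℝ) * Complex.I := by
    rw [KLw]; push_cast; ring
  rw [h, Complex.norm_add_mul_I]
  have hsc := Real.sin_sq_add_cos_sq (π * θ)
  rw [show (-1/2 : ℝ)^2 + (-(Real.cos (π * θ) / (2 * Real.sin (π * θ))))^2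
      = (1 / (2 * Real.sin (π * θ)))^2 by field_simp; nlinarith]
  exact Real.sqrt_sq (by positivity)

lemma KL_w_norm' (θ : ℝ) (hs : 0 < Real.sin (π * θ)) :
    ‖1 + KLw θ‖ = 1 / (2 * Real.sin (π * θ)) := by
  have h : 1 + KLw θ = ((1/2 : ℝ) : ℂ) + ((-(Real.cos (π * θ) / (2 * Real.sin (π * θ)))) : ℝ) * Complex.I := by
    rw [KLw]; push_cast; ring
  rw [h, Complex.norm_add_mul_I]
  have hsc := Real.sin_sq_add_cos_sq (π * θ)
  rw [show (1/2 : ℝ)^2 + (-(Real.cos (π * θ) / (2 * Real.sin (π * θ))))^2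
      = (1 / (2 * Real.sin (π * θ)))^2 by field_simp; nlinarith]
  exact Real.sqrt_sq (by positivity)

lemma KL_w_diff (θ₁ θ₂ : ℝ) :
    ‖KLw θ₁ - KLw θ₂‖ = |Real.cos (π * θ₂) / (2 * Real.sin (π * θ₂))
      - Real.cos (π * θ₁) / (2 * Real.sin (π * θ₁))| := by
  have h : KLw θ₁ - KLw θ₂ = ((Real.cos (π * θ₂) / (2 * Real.sin (π * θ₂))
      - Real.cos (π * θ₁) / (2 * Real.sin (π * θ₁)) : ℝ) : ℂ) * Complex.I := by
    rw [KLw, KLw]; push_cast; ring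
  rw [h, norm_mul, Complex.norm_I, mul_one, Complex.norm_real, Real.norm_eq_abs]

lemma KL_cot_anti {x y : ℝ} (hx : 0 < x) (hxy : x ≤ y) (hy : y < π) :
    Real.cos y / Real.sin y ≤ Real.cos x / Real.sin x := by
  have sx : 0 < Real.sin x := Real.sin_pos_of_pos_of_lt_pi hx (lt_of_le_of_lt hxy hy)
  have sy : 0 < Real.sin y := Real.sin_pos_of_pos_of_lt_pi (lt_of_lt_of_le hx hxy) hy
  rw [div_le_div_iff₀ sy sx]
  have h : Real.sin (y - x) = Real.sin y * Real.cos x - Real.cos y * Real.sin x :=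
    Real.sin_sub y x
  have h2 : 0 ≤ Real.sin (y - x) :=
    Real.sin_nonneg_of_nonneg_of_le_pi (by linarith) (by linarith)
  nlinarith

lemma KL_sum_top {M : Type*} [AddCommMonoid M] (φ : ℤ → M) (A B : ℤ) (h : A ≤ B + 1) :
    ∑ n ∈ Finset.Icc A (B + 1), φ n = (∑ n ∈ Finset.Icc A B, φ n) + φ (B + 1) := by
  rw [show Finset.Icc A (B + 1) = insert (B + 1) (Finset.Icc A B) from by
      ext x; simp only [Finset.mem_Icc, Finset.mem_insert]; omega,
    Finset.sum_insert (by simp)]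
  exact add_comm _ _

lemma KL_telescope (φ : ℤ → ℝ) (A : ℤ) : ∀ B, A ≤ B →
    ∑ n ∈ Finset.Icc A (B - 1), (φ n - φ (n + 1)) = φ A - φ B := by
  refine Int.le_induction ?_ ?_
  · simp
  · intro B hB ih
    rw [show B + 1 - 1 = B - 1 + 1 by ring, KL_sum_top _ _ _ (by omega),
      show B - 1 + 1 = B by ring, ih]
    ring

lemma KL_abel (E w : ℤ → ℂ) (A : ℤ) : ∀ B, A + 1 ≤ B →
    (∀ n, A ≤ n → n < B → E n = (E (n + 1) - E n) * w n) →
    ∑ n ∈ Finset.Icc A B, E n =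
      ∑ n ∈ Finset.Icc A (B - 2), E (n + 1) * (w n - w (n + 1))
        + E B * (1 + w (B - 1)) - E A * w A := by
  refine Int.le_induction ?_ ?_
  · intro hEE
    rw [show A + 1 - 2 = A - 1 by ring]
    rw [Finset.Icc_eq_empty (by omega : ¬ A ≤ A - 1), Finset.sum_empty]
    rw [show A + 1 - 1 = A by ring]
    rw [show (A + 1 : ℤ) = A + 1 by ring, KL_sum_top _ _ _ (by omega), Finset.Icc_self,
      Finset.sum_singleton]
    have h := hEE A le_rfl (by omega)
    linear_combination h
  · intro B hB ih hEE
    have ih' := ih (fun n hn hnB => hEE n hn (by omega))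
    rw [KL_sum_top _ _ _ (by omega), ih']
    rw [show B + 1 - 2 = B - 2 + 1 by ring, KL_sum_top _ _ _ (by omega),
      show B - 2 + 1 = B - 1 by ring, show B - 1 + 1 = B by ring,
      show B + 1 - 1 = B by ring]
    have h := hEE B (by omega) (by omega)
    linear_combination h

lemma KL_range (a b : ℝ) (hab : a ≤ b) (g : ℝ → ℝ) (hcont : ContinuousOn g (Set.Icc a b))
    (lam : ℝ) (hlam : 0 < lam) (hlow : ∀ x ∈ Set.Icc a b, ∀ m : ℤ, lam ≤ |g x - m|) :
    ∃ k : ℤ, ∀ x ∈ Set.Icc a b, g x ∈ Set.Icc ((k : ℝ) + lam) ((k : ℝ) + 1 - lam) := by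
  have ha : a ∈ Set.Icc a b := ⟨le_rfl, hab⟩
  refine ⟨⌊g a⌋, fun x hx => ?_⟩
  set k : ℤ := ⌊g a⌋ with hk
  have hfl : (k : ℝ) ≤ g a := Int.floor_le _
  have hfl2 : g a < (k : ℝ) + 1 := Int.lt_floor_add_one _
  have hga_up : g a ≤ (k : ℝ) + 1 - lam := by
    have := hlow a ha (k + 1)
    rw [abs_sub_comm, abs_of_nonneg (by push_cast; linarith)] at this
    push_cast at this ⊢; linarith
  have hga_lo : (k : ℝ) + lam ≤ g a := by
    have := hlow a ha k
    rw [abs_of_nonneg (by linarith)] at this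
    linarith
  have hcont' : ContinuousOn g (Set.Icc a x) :=
    hcont.mono (Set.Icc_subset_Icc le_rfl hx.2)
  constructor
  · -- lower bound
    rcases le_or_gt ((k : ℝ) + lam) (g x) with h | h
    · exact h
    exfalso
    have hxk : g x ≤ (k : ℝ) - lam := by
      have := hlow x hx k
      rcases abs_cases (g x - k) with ⟨he, _⟩ | ⟨he, _⟩ <;> linarith
    have : (k : ℝ) ∈ Set.Icc (g x) (g a) := ⟨by linarith, by linarith⟩
    obtain ⟨y, hy, hgy⟩ := intermediate_value_Icc' hx.1 hcont' this
    have := hlow y (⟨hy.1, le_trans hy.2 hx.2⟩) k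
    rw [hgy] at this
    simp at this
    linarith
  · rcases le_or_gt (g x) ((k : ℝ) + 1 - lam) with h | h
    · exact h
    exfalso
    have hxk : (k : ℝ) + 1 + lam ≤ g x := by
      have := hlow x hx (k + 1)
      push_cast at this
      rcases abs_cases (g x - (k + 1 : ℝ)) with ⟨he, _⟩ | ⟨he, _⟩ <;> linarith
    have : ((k : ℝ) + 1) ∈ Set.Icc (g a) (g x) := ⟨by linarith, by linarith⟩
    obtain ⟨y, hy, hgy⟩ := intermediate_value_Icc hx.1 hcont' this
    have := hlow y (⟨hy.1, le_trans hy.2 hx.2⟩) (k + 1)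
    rw [hgy] at this
    push_cast at this
    simp at this
    linarith
lemma KL_core (a b : ℝ) (f f' : ℝ → ℝ)
    (hderiv : ∀ x ∈ Set.Icc a b, HasDerivWithinAt f (f' x) (Set.Icc a b) x)
    (hmono : MonotoneOn f' (Set.Icc a b))
    (lam : ℝ) (hlam : 0 < lam) (hlam2 : lam ≤ 1/2)
    (hrange : ∀ x ∈ Set.Icc a b, f' x ∈ Set.Icc lam (1 - lam)) :
    ‖∑ n ∈ Finset.Icc ⌈a⌉ ⌊b⌋, Complex.exp (2 * Real.pi * Complex.I * (f n : ℂ))‖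
      ≤ 2 / (Real.pi * lam) := by
  have hpi := Real.pi_pos
  have hE1 : ∀ t : ℝ, ‖Complex.exp (2 * Real.pi * Complex.I * (t : ℂ))‖ = 1 := by
    intro t
    rw [show (2 * (Real.pi:ℂ) * Complex.I * (t:ℂ)) = ((2 * Real.pi * t : ℝ) : ℂ) * Complex.I by
      push_cast; ring, Complex.norm_exp_ofReal_mul_I]
  have hRHS1 : (1:ℝ) ≤ 2 / (π * lam) := by
    rw [le_div_iff₀ (by positivity)]
    nlinarith [Real.pi_le_four]
  set A := ⌈a⌉ with hA
  set B := ⌊b⌋ with hB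
  rcases lt_or_ge B A with hBA | hAB
  · rw [Finset.Icc_eq_empty (not_le.mpr hBA), Finset.sum_empty, norm_zero]
    positivity
  rcases eq_or_lt_of_le hAB with hEq | hAB'
  · rw [← hEq, Finset.Icc_self, Finset.sum_singleton]
    rw [hE1]
    exact hRHS1
  -- main case A < B
  have haA : a ≤ (A:ℝ) := Int.le_ceil a
  have hBb : (B:ℝ) ≤ b := Int.floor_le b
  have hfc : ContinuousOn f (Set.Icc a b) := fun x hx => (hderiv x hx).continuousWithinAt
  have hgc : ∀ n : ℤ, ∃ c : ℝ, A ≤ n → n ≤ B - 1 →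
      (c ∈ Set.Ioo ((n:ℝ)) ((n:ℝ)+1) ∧ f' c = f ((n:ℝ)+1) - f (n:ℝ)) := by
    intro n
    by_cases h : A ≤ n ∧ n ≤ B - 1
    · obtain ⟨h1, h2⟩ := h
      have hn_a : a ≤ (n:ℝ) := le_trans haA (by exact_mod_cast h1)
      have hn_b : (n:ℝ)+1 ≤ b := by
        have h3 : ((n+1 : ℤ):ℝ) ≤ (B:ℝ) := by exact_mod_cast (by omega : n+1 ≤ B)
        push_cast at h3
        linarith
      have cont' : ContinuousOn f (Set.Icc (n:ℝ) ((n:ℝ)+1)) :=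
        hfc.mono (Set.Icc_subset_Icc hn_a hn_b)
      have hdd : ∀ x ∈ Set.Ioo ((n:ℝ)) ((n:ℝ)+1), HasDerivAt f (f' x) x := by
        intro x hx
        have hx' : x ∈ Set.Icc a b := ⟨le_trans hn_a hx.1.le, le_trans hx.2.le hn_b⟩
        exact (hderiv x hx').hasDerivAt
          (Icc_mem_nhds (lt_of_le_of_lt hn_a hx.1) (lt_of_lt_of_le hx.2 hn_b))
      obtain ⟨c, hc1, hc2⟩ := exists_hasDerivAt_eq_slope f f'
        (by linarith : (n:ℝ) < (n:ℝ)+1) cont' hdd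
      exact ⟨c, fun _ _ => ⟨hc1, by
        rw [hc2, show ((n:ℝ)+1 - n) = 1 by ring, div_one]⟩⟩
    · exact ⟨0, fun h1 h2 => absurd ⟨h1, h2⟩ h⟩
  choose c hc using hgc
  set g : ℤ → ℝ := fun n => f ((n:ℝ)+1) - f (n:ℝ) with hg
  have hcmem : ∀ n : ℤ, A ≤ n → n ≤ B - 1 → c n ∈ Set.Icc a b := by
    intro n h1 h2
    obtain ⟨hio, _⟩ := hc n h1 h2
    have hn_a : a ≤ (n:ℝ) := le_trans haA (by exact_mod_cast h1)
    have hn_b : (n:ℝ)+1 ≤ b := by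
      have h3 : ((n+1 : ℤ):ℝ) ≤ (B:ℝ) := by exact_mod_cast (by omega : n+1 ≤ B)
      push_cast at h3
      linarith
    exact ⟨le_trans hn_a hio.1.le, le_trans hio.2.le hn_b⟩
  have hgval : ∀ n, A ≤ n → n ≤ B - 1 → g n = f' (c n) := fun n h1 h2 => ((hc n h1 h2).2).symm
  have hglam : ∀ n, A ≤ n → n ≤ B - 1 → lam ≤ g n ∧ g n ≤ 1 - lam := by
    intro n h1 h2
    rw [hgval n h1 h2]
    exact ⟨(hrange _ (hcmem n h1 h2)).1, (hrange _ (hcmem n h1 h2)).2⟩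
  have hgmono : ∀ m n, A ≤ m → m < n → n ≤ B - 1 → g m ≤ g n := by
    intro m n h1 h2 h3
    rw [hgval m h1 (by omega), hgval n (by omega) h3]
    apply hmono (hcmem m h1 (by omega)) (hcmem n (by omega) h3)
    have h4 : (c m) < (m:ℝ)+1 := (hc m h1 (by omega)).1.2
    have h5 : ((n:ℝ)) < c n := (hc n (by omega) h3).1.1
    have h6 : (m:ℝ)+1 ≤ (n:ℝ) := by exact_mod_cast h2
    linarith
  have hsin : ∀ n, A ≤ n → n ≤ B - 1 → 0 < Real.sin (π * g n) := by
    intro n h1 h2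
    obtain ⟨hl, hu⟩ := hglam n h1 h2
    exact Real.sin_pos_of_pos_of_lt_pi (by nlinarith) (by nlinarith)
  set E : ℤ → ℂ := fun n => Complex.exp (2 * Real.pi * Complex.I * ((f (n:ℝ)) : ℂ)) with hE
  set w : ℤ → ℂ := fun n => KLw (g n) with hwdef
  have hEE : ∀ n, A ≤ n → n < B → E n = (E (n+1) - E n) * w n := by
    intro n h1 h2
    have h2' : n ≤ B - 1 := by omega
    have hsn := hsin n h1 h2'
    have hsne : Real.sin (π * g n) ≠ 0 := ne_of_gt hsn
    obtain ⟨hgl, hgu⟩ := hglam n h1 h2'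
    have hexp : E (n+1) = E n * Complex.exp (2 * Real.pi * Complex.I * ((g n : ℝ) : ℂ)) := by
      rw [hE]
      dsimp only
      rw [← Complex.exp_add]
      congr 1
      rw [hg]
      push_cast
      ring
    have hne : Complex.exp (2 * Real.pi * Complex.I * ((g n : ℝ):ℂ)) - 1 ≠ 0 := by
      intro hzero
      rw [sub_eq_zero, Complex.exp_eq_one_iff] at hzero
      obtain ⟨m, hm⟩ := hzero
      have hm2 : (2 * (Real.pi:ℂ) * Complex.I) * ((g n : ℝ):ℂ) = (2 * (Real.pi:ℂ) * Complex.I) * (m:ℂ) := by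
        linear_combination hm
      have hm3 : ((g n : ℝ):ℂ) = (m:ℂ) := mul_left_cancel₀ Complex.two_pi_I_ne_zero hm2
      have hgm : g n = (m : ℝ) := by exact_mod_cast hm3
      have hm0 : (0:ℤ) < m := by exact_mod_cast (show (0:ℝ) < (m:ℝ) by rw [← hgm]; linarith)
      have hm1 : m < 1 := by exact_mod_cast (show ((m:ℝ)) < 1 by rw [← hgm]; linarith)
      omega
    rw [hexp, hwdef]
    dsimp only
    rw [← KL_w_eq _ hsne]
    rw [show E n * Complex.exp (2 * Real.pi * Complex.I * ((g n : ℝ):ℂ)) - E n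
        = E n * (Complex.exp (2 * Real.pi * Complex.I * ((g n : ℝ):ℂ)) - 1) by ring,
      mul_assoc, mul_inv_cancel₀ hne, mul_one]
  have hid := KL_abel E w A B (by omega) hEE
  rw [hid]
  set r : ℤ → ℝ := fun n => Real.cos (π * g n) / (2 * Real.sin (π * g n)) with hr
  have hnorm1 : ∀ n, A ≤ n → n ≤ B - 2 → ‖E (n+1) * (w n - w (n+1))‖ = r n - r (n+1) := by
    intro n h1 h2
    rw [norm_mul, hE1, one_mul, hwdef]
    dsimp only
    rw [KL_w_diff]
    have hm := hgmono n (n+1) h1 (by omega) (by omega)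
    obtain ⟨hl1, hu1⟩ := hglam n h1 (by omega)
    obtain ⟨hl2, hu2⟩ := hglam (n+1) (by omega) (by omega)
    have hcot := KL_cot_anti (x := π * g n) (y := π * g (n+1))
      (by nlinarith) (by nlinarith) (by nlinarith)
    rw [hr]
    dsimp only
    rw [abs_of_nonpos (by
      have s1 := hsin n h1 (by omega)
      have s2 := hsin (n+1) (by omega) (by omega)
      rw [sub_nonpos, div_le_div_iff₀ (by positivity) (by positivity)]
      rw [div_le_div_iff₀ (by positivity) (by positivity)] at hcot
      nlinarith)]
    ring
  have htel : ∑ n ∈ Finset.Icc A (B - 2), (r n - r (n+1)) = r A - r (B-1) := by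
    have h := KL_telescope r A (B-1) (by omega)
    rw [show B - 1 - 1 = B - 2 by ring] at h
    exact h
  obtain ⟨hlA, huA⟩ := hglam A le_rfl (by omega)
  obtain ⟨hlB, huB⟩ := hglam (B-1) (by omega) le_rfl
  have hsA := hsin A le_rfl (by omega)
  have hsB := hsin (B-1) (by omega) le_rfl
  have hb1 := KL_bound1 lam (g A) hlam hlA huA
  have hb2 := KL_bound2 lam (g (B-1)) hlam hlB huB
  have step1 : ‖∑ n ∈ Finset.Icc A (B - 2), E (n + 1) * (w n - w (n + 1))
      + E B * (1 + w (B - 1)) - E A * w A‖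
      ≤ (r A - r (B-1)) + 1/(2 * Real.sin (π * g (B-1))) + 1/(2 * Real.sin (π * g A)) := by
    refine le_trans (norm_sub_le _ _) ?_
    refine add_le_add (le_trans (norm_add_le _ _) (add_le_add ?_ ?_)) ?_
    · refine le_trans (norm_sum_le _ _) ?_
      rw [← htel]
      apply le_of_eq
      apply Finset.sum_congr rfl
      intro n hn
      rw [Finset.mem_Icc] at hn
      exact hnorm1 n hn.1 hn.2
    · rw [norm_mul, hE1, one_mul, hwdef]
      dsimp only
      rw [KL_w_norm' _ hsB]
    · rw [norm_mul, hE1, one_mul, hwdef]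
      dsimp only
      rw [KL_w_norm _ hsA]
  refine le_trans step1 ?_
  have e1 : (1 + Real.cos (π * g A)) / (2 * Real.sin (π * g A))
      = 1/(2 * Real.sin (π * g A)) + r A := by
    rw [hr]; dsimp only; rw [add_div]
  have e2 : (1 - Real.cos (π * g (B-1))) / (2 * Real.sin (π * g (B-1)))
      = 1/(2 * Real.sin (π * g (B-1))) - r (B-1) := by
    rw [hr]; dsimp only; rw [sub_div]
  have : 2 / (π * lam) = 1 / (π * lam) + 1 / (π * lam) := by ring
  rw [this]
  linarith [hb1, hb2, e1, e2]

lemma KL_mono (a b : ℝ) (hab : a < b) (f f' : ℝ → ℝ)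
    (hderiv : ∀ x ∈ Set.Icc a b, HasDerivWithinAt f (f' x) (Set.Icc a b) x)
    (hcont : ContinuousOn f' (Set.Icc a b))
    (hmono : MonotoneOn f' (Set.Icc a b))
    (lam : ℝ) (hlam : 0 < lam) (hlam2 : lam ≤ 1/2)
    (hlow' : ∀ x ∈ Set.Icc a b, ∀ m : ℤ, lam ≤ |f' x - m|) :
    ‖∑ n ∈ Finset.Icc ⌈a⌉ ⌊b⌋, Complex.exp (2 * Real.pi * Complex.I * (f n : ℂ))‖
      ≤ 2 / (Real.pi * lam) := by
  obtain ⟨k, hk⟩ := KL_range a b hab.le f' hcont lam hlam hlow'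
  set F : ℝ → ℝ := fun x => f x - k * x with hF
  set F' : ℝ → ℝ := fun x => f' x - k with hF'
  have hderivF : ∀ x ∈ Set.Icc a b, HasDerivWithinAt F (F' x) (Set.Icc a b) x := by
    intro x hx
    have h2 : HasDerivWithinAt (fun x : ℝ => (k:ℝ) * x) ((k:ℝ)) (Set.Icc a b) x := by
      simpa using ((hasDerivAt_id x).const_mul (k:ℝ)).hasDerivWithinAt
    exact (hderiv x hx).sub h2
  have hmonoF : MonotoneOn F' (Set.Icc a b) := by
    intro x hx y hy hxy
    simp only [hF']
    exact sub_le_sub_right (hmono hx hy hxy) _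
  have hrangeF : ∀ x ∈ Set.Icc a b, F' x ∈ Set.Icc lam (1 - lam) := by
    intro x hx
    obtain ⟨h1, h2⟩ := hk x hx
    simp only [hF', Set.mem_Icc]
    constructor <;> linarith
  have hres := KL_core a b F F' hderivF hmonoF lam hlam hlam2 hrangeF
  have hsum : ∀ n : ℤ, n ∈ Finset.Icc ⌈a⌉ ⌊b⌋ →
      Complex.exp (2 * Real.pi * Complex.I * ((F (n:ℝ) : ℝ) : ℂ))
        = Complex.exp (2 * Real.pi * Complex.I * ((f (n:ℝ) : ℝ) : ℂ)) := by
    intro n _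
    rw [show (2 * (Real.pi:ℂ) * Complex.I * ((F (n:ℝ) : ℝ) : ℂ))
        = 2 * Real.pi * Complex.I * ((f (n:ℝ) : ℝ):ℂ) + ((-(k*n) : ℤ):ℂ) * (2 * Real.pi * Complex.I) by
      simp only [hF]; push_cast; ring]
    rw [Complex.exp_add, Complex.exp_int_mul_two_pi_mul_I, mul_one]
  rwa [Finset.sum_congr rfl hsum] at hres

/-- **Kusmin–Landau theorem.** Let `f : [a,b] → ℝ` be `C¹` with monotone derivative `f'` on
`[a,b]`, and suppose `‖f'(x)‖ ≥ λ₁ > 0` on `[a,b]`, where `‖y‖` is the distance from `y` to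
the nearest integer. Then `|Σ_{n ∈ [a,b] ∩ ℤ} e^{2πi f(n)}| ≤ 2/(π λ₁)`. -/
theorem kusmin_landau (a b : ℝ) (hab : a < b) (f f' : ℝ → ℝ)
    (hderiv : ∀ x ∈ Set.Icc a b, HasDerivWithinAt f (f' x) (Set.Icc a b) x)
    (hcont : ContinuousOn f' (Set.Icc a b))
    (hmono : MonotoneOn f' (Set.Icc a b) ∨ AntitoneOn f' (Set.Icc a b))
    (lam : ℝ) (hlam : 0 < lam)
    (hlow : ∀ x ∈ Set.Icc a b, lam ≤ |f' x - round (f' x)|) :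
    ‖∑ n ∈ Finset.Icc ⌈a⌉ ⌊b⌋, Complex.exp (2 * Real.pi * Complex.I * (f n : ℂ))‖
      ≤ 2 / (Real.pi * lam) := by
  have hmemA : a ∈ Set.Icc a b := ⟨le_rfl, hab.le⟩
  have hlam2 : lam ≤ 1/2 := le_trans (hlow a hmemA) (abs_sub_round (f' a))
  have hlow' : ∀ x ∈ Set.Icc a b, ∀ m : ℤ, lam ≤ |f' x - m| :=
    fun x hx m => le_trans (hlow x hx) (round_le (f' x) m)
  cases hmono with
  | inl h => exact KL_mono a b hab f f' hderiv hcont h lam hlam hlam2 hlow'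
  | inr h =>
    have key : ∀ n : ℤ, Complex.exp (2 * Real.pi * Complex.I * ((-(f (n:ℝ)) : ℝ) : ℂ))
        = (starRingEnd ℂ) (Complex.exp (2 * Real.pi * Complex.I * ((f (n:ℝ) : ℝ) : ℂ))) := by
      intro n
      rw [← Complex.exp_conj]
      congr 1
      simp only [map_mul, Complex.conj_I, Complex.conj_ofReal, map_ofNat]
      push_cast
      ring
    have hsum : ∑ n ∈ Finset.Icc ⌈a⌉ ⌊b⌋,
        Complex.exp (2 * Real.pi * Complex.I * (((fun x => -f x) (n:ℝ) : ℝ) : ℂ))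
        = (starRingEnd ℂ) (∑ n ∈ Finset.Icc ⌈a⌉ ⌊b⌋,
            Complex.exp (2 * Real.pi * Complex.I * ((f (n:ℝ) : ℝ) : ℂ))) := by
      rw [map_sum]
      exact Finset.sum_congr rfl (fun n _ => key n)
    have hres := KL_mono a b hab (fun x => -f x) (fun x => -f' x)
      (fun x hx => (hderiv x hx).neg) hcont.neg
      (fun x hx y hy hxy => neg_le_neg (h hx hy hxy))
      lam hlam hlam2
      (fun x hx m => by
        rw [show -f' x - (m:ℝ) = -(f' x - ((-m : ℤ):ℝ)) by push_cast; ring, abs_neg]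
        exact hlow' x hx (-m))
    rw [hsum] at hres
    rwa [RCLike.norm_conj] at hres
end
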